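/- arXiv:2104.09089 — 5 statements merged into one kernel-verified Lean document; each statement's English description precedes it below -/
import Mathlib

section
/- Let α be irrational, and let J_k(q) be the special intervals defined from the partition A_k(α) as above. If 1 ≤ q', q'' ≤ q_{k+1} − 2 are such that {q'α} and {q''α} are neighboring points of the partition A_k(α) with both points in (0, 1−α) or both in (1−α, 1), then the overlap satisfies length(J_k(q') ∩ J_k(q'')) ≥ ‖q_kα‖. -/
/-- `q_k`: the denominators of the continued fraction convergents of `α`. -/
noncomputable def cfq (α : ℝ) (k : ℕ) : ℝ := (GenContFract.of α).dens k

/-- `a_k`: the continued fraction digits (partial quotients) of `α`, for `k ≥ 1`. -/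
noncomputable def cfa (α : ℝ) (k : ℕ) : ℝ :=
  ((GenContFract.of α).partDens.get? (k - 1)).getD 0

/-- `‖y‖`: the distance from `y` to the nearest integer. -/
noncomputable def nearestIntDist (y : ℝ) : ℝ := |y - round y|

namespace Stmt9Aux

open GenContFract

lemma not_term (α : ℝ) (hα : Irrational α) (n : ℕ) : ¬(GenContFract.of α).TerminatedAt n := by
  intro h
  obtain ⟨q, hq⟩ := (GenContFract.terminates_iff_rat α).mp ⟨n, h⟩
  exact hα ⟨q, hq.symm⟩

lemma exists_int_contsAux (α : ℝ) (hα : Irrational α) (n : ℕ) :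
    ∃ p q : ℤ, ((GenContFract.of α).contsAux n).a = (p : ℝ) ∧
      ((GenContFract.of α).contsAux n).b = (q : ℝ) := by
  induction n using Nat.twoStepInduction with
  | zero => exact ⟨1, 0, by simp [GenContFract.zeroth_contAux_eq_one_zero], by
      simp [GenContFract.zeroth_contAux_eq_one_zero]⟩
  | one => exact ⟨⌊α⌋, 1, by
      simp [GenContFract.first_contAux_eq_h_one, GenContFract.of_h_eq_floor], by
      simp [GenContFract.first_contAux_eq_h_one]⟩
  | more n ih1 ih2 =>
    obtain ⟨p0, q0, hp0, hq0⟩ := ih1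
    obtain ⟨p1, q1, hp1, hq1⟩ := ih2
    obtain ⟨gp, hgp⟩ := Option.ne_none_iff_exists'.mp (not_term α hα n)
    obtain ⟨ha, z, hb⟩ := GenContFract.of_partNum_eq_one_and_exists_int_partDen_eq hgp
    have hrec := GenContFract.contsAux_recurrence hgp rfl rfl
    refine ⟨z * p1 + p0, z * q1 + q0, ?_, ?_⟩ <;>
      rw [hrec] <;> simp [ha, hb, hp0, hp1, hq0, hq1]

lemma conv_sign (α : ℝ) (hα : Irrational α) (n : ℕ) :
    0 < (-1 : ℝ) ^ n * (α - (GenContFract.of α).convs n) := by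
  have h1 : IntFractPair.stream α (n + 1) ≠ none := by
    intro h
    exact not_term α hα n (of_terminatedAt_n_iff_succ_nth_intFractPair_stream_eq_none.mpr h)
  obtain ⟨ifp1, hifp1⟩ := Option.ne_none_iff_exists'.mp h1
  obtain ⟨ifp0, h0, hfr0, -⟩ := IntFractPair.succ_nth_stream_eq_some_iff.mp hifp1
  have hsub := sub_convs_eq h0
  simp only [if_neg hfr0] at hsub
  rw [hsub]
  have hB : (0 : ℝ) < ((GenContFract.of α).contsAux (n + 1)).b := by
    have hfib : ((Nat.fib (n + 1) : ℝ)) ≤ ((GenContFract.of α).contsAux (n + 1)).b :=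
      fib_le_of_contsAux_b (Or.inr (not_term α hα _))
    have : (0 : ℝ) < Nat.fib (n + 1) := by
      exact_mod_cast Nat.fib_pos.mpr n.succ_pos
    linarith
  have hpB : (0 : ℝ) ≤ ((GenContFract.of α).contsAux n).b := zero_le_of_contsAux_b
  have hfr : 0 < ifp0.fr := lt_of_le_of_ne (IntFractPair.nth_stream_fr_nonneg h0) (Ne.symm hfr0)
  have hone : (-1 : ℝ) ^ n * (-1 : ℝ) ^ n = 1 := by
    rw [← pow_add]
    exact Even.neg_one_pow ⟨n, rfl⟩
  calc (0:ℝ) < (1 : ℝ) / (((GenContFract.of α).contsAux (n + 1)).b *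
      (ifp0.fr⁻¹ * ((GenContFract.of α).contsAux (n + 1)).b + ((GenContFract.of α).contsAux n).b)) := by
        positivity
    _ = (-1 : ℝ) ^ n * ((-1) ^ n / (((GenContFract.of α).contsAux (n + 1)).b *
      (ifp0.fr⁻¹ * ((GenContFract.of α).contsAux (n + 1)).b + ((GenContFract.of α).contsAux n).b))) := by
        rw [mul_div_assoc', hone]

lemma dens_pos (α : ℝ) (hα : Irrational α) (n : ℕ) : (0:ℝ) < (GenContFract.of α).dens n := by
  have hfib : ((Nat.fib (n + 1) : ℝ)) ≤ (GenContFract.of α).dens n :=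
    succ_nth_fib_le_of_nth_den (Or.inr (not_term α hα _))
  have : (0 : ℝ) < Nat.fib (n + 1) := by exact_mod_cast Nat.fib_pos.mpr n.succ_pos
  linarith

lemma theta_pos (α : ℝ) (hα : Irrational α) (n : ℕ) :
    0 < (-1 : ℝ) ^ n * ((GenContFract.of α).dens n * α - (GenContFract.of α).nums n) := by
  have h := conv_sign α hα n
  have hd := dens_pos α hα n
  have hc : (GenContFract.of α).convs n = (GenContFract.of α).nums n / (GenContFract.of α).dens n :=
    conv_eq_num_div_den
  have he : (GenContFract.of α).dens n * α - (GenContFract.of α).nums n =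
      (GenContFract.of α).dens n * (α - (GenContFract.of α).convs n) := by
    rw [hc]; field_simp
  rw [he, show (-1 : ℝ) ^ n * ((GenContFract.of α).dens n * (α - (GenContFract.of α).convs n)) =
    (GenContFract.of α).dens n * ((-1) ^ n * (α - (GenContFract.of α).convs n)) by ring]
  exact mul_pos hd h

lemma det_eq (α : ℝ) (hα : Irrational α) (n : ℕ) :
    (GenContFract.of α).nums n * (GenContFract.of α).dens (n + 1) -
      (GenContFract.of α).dens n * (GenContFract.of α).nums (n + 1) = (-1) ^ (n + 1) :=
  SimpContFract.determinant (s := SimpContFract.of α) (not_term α hα n)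

lemma dens_add_le (α : ℝ) (hα : Irrational α) (n : ℕ) :
    (GenContFract.of α).dens n + (GenContFract.of α).dens (n + 1) ≤
      (GenContFract.of α).dens (n + 2) := by
  obtain ⟨gp, hgp⟩ := Option.ne_none_iff_exists'.mp (not_term α hα (n + 1))
  have ha : gp.a = 1 := (of_partNum_eq_one_and_exists_int_partDen_eq hgp).1
  have hb : (1 : ℝ) ≤ gp.b := of_one_le_get?_partDen (partDen_eq_s_b hgp)
  have hrec := dens_recurrence (g := GenContFract.of α) hgp rfl rfl
  have hd1 : (0:ℝ) ≤ (GenContFract.of α).dens (n + 1) := zero_le_of_den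
  rw [hrec, ha]
  nlinarith

lemma num_eq (α : ℝ) (n : ℕ) :
    (GenContFract.of α).nums n = ((GenContFract.of α).contsAux (n + 1)).a := by
  rw [GenContFract.num_eq_conts_a, GenContFract.nth_cont_eq_succ_nth_contAux]

lemma den_eq (α : ℝ) (n : ℕ) :
    (GenContFract.of α).dens n = ((GenContFract.of α).contsAux (n + 1)).b := by
  rw [GenContFract.den_eq_conts_b, GenContFract.nth_cont_eq_succ_nth_contAux]

end Stmt9Aux

/-- If {q'α} and {q''α} are neighboring points of the partition A_k(α), both in (0, 1−α) or
both in (1−α, 1), then length(J_k(q') ∩ J_k(q'')) ≥ ‖q_kα‖, where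
J_k(q) = [{qα} − d**, {qα} + d*). -/
theorem stmt9 (α : ℝ) (hα : Irrational α) (h0 : 0 < α) (h1 : α < 1)
    (k : ℕ) (hk : 1 ≤ k) (dst dss : ℝ)
    (hdss : IsLeast {x : ℝ | ∃ q : ℤ, -1 ≤ q ∧ (q : ℝ) ≤ cfq α (k + 1) - 2 ∧ q ≠ 0 ∧
      Int.fract ((q : ℝ) * α) = x} dss)
    (hdst : IsLeast {x : ℝ | ∃ q : ℤ, -1 ≤ q ∧ (q : ℝ) ≤ cfq α (k + 1) - 2 ∧ q ≠ 0 ∧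
      1 - Int.fract ((q : ℝ) * α) = x} dst)
    (q' q'' : ℤ) (hq'1 : 1 ≤ q') (hq'2 : (q' : ℝ) ≤ cfq α (k + 1) - 2)
    (hq''1 : 1 ≤ q'') (hq''2 : (q'' : ℝ) ≤ cfq α (k + 1) - 2)
    (horder : Int.fract ((q' : ℝ) * α) < Int.fract ((q'' : ℝ) * α))
    (hneighbor : ∀ q : ℤ, -1 ≤ q → (q : ℝ) ≤ cfq α (k + 1) - 2 →
      Int.fract ((q : ℝ) * α) ∉ Set.Ioo (Int.fract ((q' : ℝ) * α)) (Int.fract ((q'' : ℝ) * α)))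
    (hside : (Int.fract ((q' : ℝ) * α) ∈ Set.Ioo 0 (1 - α) ∧
        Int.fract ((q'' : ℝ) * α) ∈ Set.Ioo 0 (1 - α)) ∨
      (Int.fract ((q' : ℝ) * α) ∈ Set.Ioo (1 - α) 1 ∧
        Int.fract ((q'' : ℝ) * α) ∈ Set.Ioo (1 - α) 1)) :
    ENNReal.ofReal (nearestIntDist (cfq α k * α)) ≤
      MeasureTheory.volume
        (Set.Ico (Int.fract ((q' : ℝ) * α) - dss) (Int.fract ((q' : ℝ) * α) + dst) ∩
          Set.Ico (Int.fract ((q'' : ℝ) * α) - dss) (Int.fract ((q'' : ℝ) * α) + dst)) := by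
  classical
  obtain ⟨pk, qk, hpk, hqk⟩ := Stmt9Aux.exists_int_contsAux α hα (k + 1)
  obtain ⟨pk1, qk1, hpk1, hqk1⟩ := Stmt9Aux.exists_int_contsAux α hα (k + 2)
  rw [← Stmt9Aux.num_eq] at hpk hpk1
  rw [← Stmt9Aux.den_eq] at hqk hqk1
  have hqkR : (0:ℝ) < qk := hqk ▸ Stmt9Aux.dens_pos α hα k
  have hqk1R : (0:ℝ) < qk1 := hqk1 ▸ Stmt9Aux.dens_pos α hα (k + 1)
  have hqkZ : 1 ≤ qk := by exact_mod_cast hqkR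
  have hqk1Z2 : 2 ≤ qk1 := by
    have hfib : ((Nat.fib (k + 2) : ℝ)) ≤ (GenContFract.of α).dens (k + 1) :=
      GenContFract.succ_nth_fib_le_of_nth_den (Or.inr (Stmt9Aux.not_term α hα _))
    have h2 : 2 ≤ Nat.fib (k + 2) := by
      have := Nat.fib_mono (show 3 ≤ k + 2 by omega)
      simpa [show Nat.fib 3 = 2 from rfl] using this
    rw [hqk1] at hfib
    have h2R : (2:ℝ) ≤ (qk1 : ℝ) := le_trans (by exact_mod_cast h2) hfib
    exact_mod_cast h2R
  have hqkle : qk ≤ qk1 := by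
    have hmono := GenContFract.of_den_mono (v := α) (n := k)
    rw [hqk, hqk1] at hmono
    exact_mod_cast hmono
  set ε : ℝ := (-1 : ℝ) ^ k with hεdef
  have hε2 : ε * ε = 1 := by
    rw [hεdef, ← pow_add]
    exact Even.neg_one_pow ⟨k, rfl⟩
  have hεabs : |ε| = 1 := by
    rw [hεdef, abs_pow, abs_neg, abs_one, one_pow]
  set θk : ℝ := (qk : ℝ) * α - pk with hθkdef
  set θk1 : ℝ := (qk1 : ℝ) * α - pk1 with hθk1def
  have hθkpos : 0 < ε * θk := by
    have := Stmt9Aux.theta_pos α hα k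
    rw [hpk, hqk] at this
    exact this
  have hθk1pos : 0 < -(ε * θk1) := by
    have h' := Stmt9Aux.theta_pos α hα (k + 1)
    rw [hpk1, hqk1] at h'
    calc (0:ℝ) < (-1 : ℝ) ^ (k+1) * ((qk1:ℝ) * α - pk1) := h'
      _ = -(ε * θk1) := by rw [hθk1def, pow_succ, hεdef]; ring
  set β : ℝ := ε * θk with hβdef
  set γ : ℝ := -(ε * θk1) with hγdef
  have hβpos : 0 < β := hθkpos
  have hγpos : 0 < γ := hθk1pos
  have hθkε : θk = ε * β := by rw [hβdef]; linear_combination (-θk) * hε2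
  have hθk1ε : θk1 = -(ε * γ) := by rw [hγdef]; linear_combination (-θk1) * hε2
  have hdet1R : (pk:ℝ) * qk1 - qk * pk1 = (-1) ^ (k+1) := by
    have hd := Stmt9Aux.det_eq α hα k
    rw [hpk, hqk, hpk1, hqk1] at hd
    exact hd
  have hps : ((-1:ℝ)) ^ (k+1) = -ε := by rw [pow_succ, hεdef]; ring
  have hid1 : (qk1:ℝ) * β + qk * γ = 1 := by
    have hd : (qk1:ℝ) * θk - qk * θk1 = ε := by
      rw [hθkdef, hθk1def]
      linear_combination -hdet1R - hps
    linear_combination (qk1:ℝ) * hβdef + (qk:ℝ) * hγdef + ε * hd + hε2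
  have hγltβ : γ < β := by
    have hdet2R := Stmt9Aux.det_eq α hα (k + 1)
    have hθk2pos := Stmt9Aux.theta_pos α hα (k + 2)
    set θk2 : ℝ := (GenContFract.of α).dens (k+2) * α - (GenContFract.of α).nums (k+2) with hθk2def
    set δ : ℝ := ε * θk2 with hδdef
    have hps2 : ((-1:ℝ)) ^ (k+2) = ε := by rw [pow_succ, pow_succ, hεdef]; ring
    have hδpos : 0 < δ := by
      calc (0:ℝ) < (-1 : ℝ) ^ (k+2) * θk2 := hθk2pos
        _ = δ := by rw [hδdef, hps2]
    have hd2 : (GenContFract.of α).dens (k+2) * θk1 - (qk1:ℝ) * θk2 = -ε := by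
      linear_combination (GenContFract.of α).dens (k+2) * hθk1def - (qk1:ℝ) * hθk2def
        - hdet2R - hps2 + (GenContFract.of α).dens (k+2) * hpk1
        - (GenContFract.of α).nums (k+2) * hqk1
    have hid2 : (GenContFract.of α).dens (k+2) * γ + (qk1:ℝ) * δ = 1 := by
      linear_combination (GenContFract.of α).dens (k+2) * hγdef + (qk1:ℝ) * hδdef
        + (-ε) * hd2 + hε2
    have hsum : (qk:ℝ) + qk1 ≤ (GenContFract.of α).dens (k+2) := by
      have hs := Stmt9Aux.dens_add_le α hα k
      rwa [hqk, hqk1] at hs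
    have h2 : (GenContFract.of α).dens (k+2) * γ < 1 := by
      have := mul_pos hqk1R hδpos
      linarith
    have h3 : (qk:ℝ) * γ + qk1 * γ ≤ (GenContFract.of α).dens (k+2) * γ := by
      calc (qk:ℝ) * γ + qk1 * γ = ((qk:ℝ) + qk1) * γ := by ring
        _ ≤ (GenContFract.of α).dens (k+2) * γ := mul_le_mul_of_nonneg_right hsum hγpos.le
    have h5 : (qk1:ℝ) * γ < qk1 * β := by
      have := mul_pos hqkR hγpos
      linarith
    exact lt_of_mul_lt_mul_left h5 hqk1R.le
  have hβlt1 : β < 1 := by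
    have h2 : (0:ℝ) < qk * γ := mul_pos hqkR hγpos
    have h3 : (1:ℝ) ≤ (qk1:ℝ) := by exact_mod_cast (by omega : (1:ℤ) ≤ qk1)
    have h4 : β ≤ (qk1:ℝ) * β := by
      calc β = 1 * β := (one_mul β).symm
        _ ≤ (qk1:ℝ) * β := mul_le_mul_of_nonneg_right h3 hβpos.le
    linarith
  have hdetZ : pk * qk1 - qk * pk1 = (-1) ^ (k+1) := by
    have hc : ((pk * qk1 - qk * pk1 : ℤ) : ℝ) = (((-1:ℤ) ^ (k+1) : ℤ) : ℝ) := by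
      push_cast
      exact hdet1R
    exact_mod_cast hc
  -- the key classification lemma
  have key : ∀ q p : ℤ, q ≠ 0 → -qk1 < q → q < qk1 →
      β ≤ |(q:ℝ) * α - p| ∧ (|(q:ℝ) * α - p| < β + γ →
        (q = qk ∧ (q:ℝ) * α - p = θk) ∨ (q = -qk ∧ (q:ℝ) * α - p = -θk)) := by
    intro q p hq0 hqlo hqhi
    have heeZ : ((-1:ℤ) ^ k) * ((-1:ℤ) ^ k) = 1 := by
      rw [← pow_add]
      exact Even.neg_one_pow ⟨k, rfl⟩
    have hpsZ : ((-1:ℤ)) ^ (k+1) = -((-1:ℤ)) ^ k := by rw [pow_succ]; ring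
    obtain ⟨x, y, hxq, hxp⟩ : ∃ x y : ℤ, q = x * qk + y * qk1 ∧ p = x * pk + y * pk1 := by
      refine ⟨(-1) ^ k * (q * pk1 - p * qk1), (-1) ^ k * (p * qk - q * pk), ?_, ?_⟩
      · linear_combination ((-1:ℤ)^k * q) * hdetZ + ((-1:ℤ)^k * q) * hpsZ
          + (-q) * heeZ
      · linear_combination ((-1:ℤ)^k * p) * hdetZ + ((-1:ℤ)^k * p) * hpsZ
          + (-p) * heeZ
    have hcx : ((x : ℝ)) * qk + (y:ℝ) * qk1 = (q:ℝ) := by exact_mod_cast hxq.symm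
    have hcp : ((x : ℝ)) * pk + (y:ℝ) * pk1 = (p:ℝ) := by exact_mod_cast hxp.symm
    have hreal : (q:ℝ) * α - p = x * θk + y * θk1 := by
      rw [hθkdef, hθk1def]
      linear_combination α * hcx.symm - hcp.symm
    have hrealε : (q:ℝ) * α - p = ε * ((x:ℝ) * β - y * γ) := by
      rw [hreal, hθkε, hθk1ε]; ring
    have habs : |(q:ℝ) * α - p| = |(x:ℝ) * β - y * γ| := by
      rw [hrealε, abs_mul, hεabs, one_mul]
    rcases eq_or_ne y 0 with hy | hy
    · subst hy
      have hx0 : x ≠ 0 := by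
        intro h; subst h; simp at hxq; exact hq0 hxq
      have habs' : |(q:ℝ) * α - p| = |(x:ℝ)| * β := by
        rw [habs, show ((x:ℝ) * β - (0:ℤ) * γ) = (x:ℝ) * β by push_cast; ring,
          abs_mul, abs_of_pos hβpos]
      have hx1 : (1:ℝ) ≤ |(x:ℝ)| := by
        rw [← Int.cast_abs]
        exact_mod_cast Int.one_le_abs hx0
      constructor
      · rw [habs']
        have h6 := mul_le_mul_of_nonneg_right hx1 hβpos.le
        linarith
      · intro hlt
        rw [habs'] at hlt
        have hxabs : |(x:ℝ)| < 2 := by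
          have h7 : |(x:ℝ)| * β < 2 * β := by linarith
          exact lt_of_mul_lt_mul_right h7 hβpos.le
        have hxabsZ : |x| < 2 := by
          have h8 : ((|x|:ℤ):ℝ) < ((2:ℤ):ℝ) := by rw [Int.cast_abs]; exact_mod_cast hxabs
          exact_mod_cast h8
        have hx11 : x = 1 ∨ x = -1 := by
          rcases abs_lt.mp hxabsZ with ⟨hl, hr⟩; omega
        rcases hx11 with rfl | rfl
        · left
          constructor
          · omega
          · rw [hreal]; push_cast; ring
        · right
          constructor
          · omega
          · rw [hreal]; push_cast; ring
    · rcases eq_or_ne x 0 with hx | hx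
      · exfalso
        subst hx
        simp only [zero_mul, zero_add] at hxq
        rcases (by omega : 1 ≤ y ∨ y ≤ -1) with hy1 | hy1
        · have h9 : qk1 ≤ y * qk1 := le_mul_of_one_le_left (by omega) hy1
          omega
        · have h9 : y * qk1 ≤ -1 * qk1 := mul_le_mul_of_nonneg_right hy1 (by omega)
          omega
      · have hββγ : β + γ ≤ |(x:ℝ) * β - y * γ| := by
          rcases (by omega : (1 ≤ x ∧ 1 ≤ y) ∨ (x ≤ -1 ∧ y ≤ -1) ∨ (1 ≤ x ∧ y ≤ -1)
            ∨ (x ≤ -1 ∧ 1 ≤ y)) with ⟨hx1, hy1⟩ | ⟨hx1, hy1⟩ | ⟨hx1, hy1⟩ | ⟨hx1, hy1⟩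
          · exfalso
            have hA : qk ≤ x * qk := le_mul_of_one_le_left (by omega) hx1
            have hB : qk1 ≤ y * qk1 := le_mul_of_one_le_left (by omega) hy1
            omega
          · exfalso
            have hA : x * qk ≤ -1 * qk := mul_le_mul_of_nonneg_right hx1 (by omega)
            have hB : y * qk1 ≤ -1 * qk1 := mul_le_mul_of_nonneg_right hy1 (by omega)
            omega
          · have hxR : (1:ℝ) ≤ (x:ℝ) := by exact_mod_cast hx1
            have hyR : (y:ℝ) ≤ -1 := by exact_mod_cast hy1
            have hA : β ≤ (x:ℝ) * β := le_mul_of_one_le_left hβpos.le hxR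
            have hB : (y:ℝ) * γ ≤ -γ := by
              have := mul_le_mul_of_nonneg_right hyR hγpos.le
              linarith
            rw [abs_of_pos (by linarith)]
            linarith
          · have hxR : (x:ℝ) ≤ -1 := by exact_mod_cast hx1
            have hyR : (1:ℝ) ≤ (y:ℝ) := by exact_mod_cast hy1
            have hA : (x:ℝ) * β ≤ -β := by
              have := mul_le_mul_of_nonneg_right hxR hβpos.le
              linarith
            have hB : γ ≤ (y:ℝ) * γ := le_mul_of_one_le_left hγpos.le hyR
            rw [abs_of_neg (by linarith), neg_sub]
            linarith
        constructor
        · rw [habs]; linarith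
        · intro hlt
          rw [habs] at hlt
          linarith
  -- set up fract notation
  have hcfq : cfq α (k+1) = (qk1:ℝ) := hqk1
  set F1 := Int.fract ((q':ℝ) * α) with hF1def
  set F2 := Int.fract ((q'':ℝ) * α) with hF2def
  have hfrpos : ∀ m : ℤ, m ≠ 0 → 0 < Int.fract ((m:ℝ) * α) := by
    intro m hm
    rcases (Int.fract_nonneg ((m:ℝ) * α)).lt_or_eq with h | h
    · exact h
    · exfalso
      have hirr : Irrational ((m:ℝ) * α) := hα.intCast_mul hm
      have hself := Int.self_sub_floor ((m:ℝ) * α)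
      exact hirr.ne_int ⌊(m:ℝ) * α⌋ (by linarith [h.symm ▸ hself])
  have hF1pos : 0 < F1 := hfrpos q' (by omega)
  have hF2lt1 : F2 < 1 := Int.fract_lt_one _
  have hq'Z : q' ≤ qk1 - 2 := by
    rw [hcfq] at hq'2
    have h' : ((q':ℤ):ℝ) ≤ ((qk1 - 2 : ℤ):ℝ) := by push_cast; linarith
    exact_mod_cast h'
  -- the neighbor move principle
  have move : ∀ m : ℤ, -1 ≤ m → m ≤ qk1 - 2 → ∀ c : ℝ, 0 < c → ∀ z : ℤ,
      (m:ℝ) * α = F1 + c + z → F2 - F1 ≤ c := by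
    intro m hm1 hm2 c hc z hz
    by_cases hlt : F1 + c < 1
    · have hfr : Int.fract ((m:ℝ) * α) = F1 + c := by
        rw [hz, Int.fract_add_intCast, Int.fract_eq_self.mpr ⟨by linarith, hlt⟩]
      have hm2R : (m:ℝ) ≤ cfq α (k+1) - 2 := by
        rw [hcfq]
        have : (m:ℝ) ≤ ((qk1 - 2 : ℤ) : ℝ) := by exact_mod_cast hm2
        push_cast at this
        linarith
      have hn := hneighbor m hm1 hm2R
      rw [hfr] at hn
      by_contra hg
      push_neg at hg
      exact hn ⟨by linarith, by linarith⟩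
    · linarith
  -- extract the witnesses for dss and dst
  obtain ⟨s, hs1, hs2, hs0, hsval⟩ := hdss.1
  obtain ⟨t, ht1, ht2, ht0, htval⟩ := hdst.1
  have hs2Z : s ≤ qk1 - 2 := by
    rw [hcfq] at hs2
    have h' : ((s:ℤ):ℝ) ≤ ((qk1 - 2 : ℤ):ℝ) := by push_cast; linarith
    exact_mod_cast h'
  have ht2Z : t ≤ qk1 - 2 := by
    rw [hcfq] at ht2
    have h' : ((t:ℤ):ℝ) ≤ ((qk1 - 2 : ℤ):ℝ) := by push_cast; linarith
    exact_mod_cast h'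
  have hdsspos : 0 < dss := hsval ▸ hfrpos s hs0
  have hdstpos : 0 < dst := by
    rw [← htval]
    linarith [Int.fract_lt_one ((t:ℝ) * α)]
  have hsabs : (s:ℝ) * α - ⌊(s:ℝ) * α⌋ = dss := by
    rw [Int.self_sub_floor, hsval]
  have htabs : (t:ℝ) * α - ((⌊(t:ℝ) * α⌋ + 1 : ℤ) : ℝ) = -dst := by
    push_cast
    rw [← htval]
    have := Int.self_sub_floor ((t:ℝ) * α)
    linarith
  have hdssβ : β ≤ dss := by
    have hk1 := (key s ⌊(s:ℝ) * α⌋ hs0 (by omega) (by omega)).1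
    rwa [show |(s:ℝ) * α - ⌊(s:ℝ) * α⌋| = dss by rw [hsabs]; exact abs_of_pos hdsspos] at hk1
  have hdstβ : β ≤ dst := by
    have hk1 := (key t (⌊(t:ℝ) * α⌋ + 1) ht0 (by omega) (by omega)).1
    rwa [show |(t:ℝ) * α - ((⌊(t:ℝ) * α⌋ + 1 : ℤ) : ℝ)| = dst by
      rw [htabs, abs_neg]; exact abs_of_pos hdstpos] at hk1
  -- bound the nearest-integer distance by β
  have hnid : nearestIntDist (cfq α k * α) ≤ β := by
    have hcq : cfq α k * α = (qk:ℝ) * α := by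
      have : cfq α k = (qk:ℝ) := hqk
      rw [this]
    rw [hcq, nearestIntDist, abs_sub_round_eq_min]
    rcases Nat.even_or_odd k with hpar | hpar
    · have hεval : ε = 1 := by rw [hεdef]; exact Even.neg_one_pow hpar
      have he : (qk:ℝ) * α = ((pk:ℤ):ℝ) + β := by
        have h' : θk = β := by rw [hθkε, hεval, one_mul]
        rw [← h', hθkdef]; push_cast; ring
      rw [he, Int.fract_intCast_add, Int.fract_eq_self.mpr ⟨hβpos.le, hβlt1⟩]
      exact min_le_left _ _
    · have hεval : ε = -1 := by rw [hεdef]; exact Odd.neg_one_pow hpar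
      have he : (qk:ℝ) * α = ((pk - 1:ℤ):ℝ) + (1 - β) := by
        have h' : θk = -β := by rw [hθkε, hεval]; ring
        have h'' : (qk:ℝ) * α - pk = -β := by rw [← hθkdef]; exact h'
        push_cast
        linarith
      rw [he, Int.fract_intCast_add, Int.fract_eq_self.mpr ⟨by linarith, by linarith⟩]
      calc min (1-β) (1-(1-β)) ≤ 1-(1-β) := min_le_right _ _
        _ = β := by ring
  -- it suffices to bound nid + gap ≤ dss + dst
  suffices hmain : nearestIntDist (cfq α k * α) + (F2 - F1) ≤ dss + dst by
    rw [Set.Ico_inter_Ico,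
      show (F1 - dss) ⊔ (F2 - dss) = F2 - dss from sup_eq_right.mpr (by linarith),
      show (F1 + dst) ⊓ (F2 + dst) = F1 + dst from inf_eq_left.mpr (by linarith),
      Real.volume_Ico]
    exact ENNReal.ofReal_le_ofReal (by linarith)
  have hF1floor : F1 = (q':ℝ) * α - ⌊(q':ℝ) * α⌋ := by
    rw [hF1def, ← Int.self_sub_floor]
  rcases Nat.even_or_odd k with hpar | hpar
  · -- k even
    have hεval : ε = 1 := by rw [hεdef]; exact Even.neg_one_pow hpar
    have hθkβ : θk = β := by rw [hθkε, hεval, one_mul]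
    have hθk1γ : θk1 = -γ := by rw [hθk1ε, hεval]; ring
    have hqkZ2 : 2 ≤ qk := by
      have hk2 : 2 ≤ k := by
        rcases hpar with ⟨j, hj⟩; omega
      have hfib : ((Nat.fib (k + 1) : ℝ)) ≤ (GenContFract.of α).dens k :=
        GenContFract.succ_nth_fib_le_of_nth_den (Or.inr (Stmt9Aux.not_term α hα _))
      have h2 : 2 ≤ Nat.fib (k + 1) := by
        have := Nat.fib_mono (show 3 ≤ k + 1 by omega)
        simpa [show Nat.fib 3 = 2 from rfl] using this
      rw [hqk] at hfib
      have h2R : (2:ℝ) ≤ (qk : ℝ) := le_trans (by exact_mod_cast h2) hfib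
      exact_mod_cast h2R
    by_cases hn1 : q' + qk ≤ qk1 - 2
    · have hmv : F2 - F1 ≤ β := by
        apply move (q' + qk) (by omega) hn1 β hβpos (⌊(q':ℝ) * α⌋ + pk)
        have hqke : (qk:ℝ) * α = (pk:ℝ) + β := by
          have := hθkdef; rw [hθkβ] at this; linarith
        push_cast
        rw [hF1floor]
        linarith
      linarith
    · push_neg at hn1
      have hmv : F2 - F1 ≤ β + γ := by
        apply move (q' + qk - qk1) (by omega) (by omega) (β + γ) (by linarith)
          (⌊(q':ℝ) * α⌋ + pk - pk1)
        have hqke : (qk:ℝ) * α = (pk:ℝ) + β := by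
          have := hθkdef; rw [hθkβ] at this; linarith
        have hqk1e : (qk1:ℝ) * α = (pk1:ℝ) - γ := by
          have := hθk1def; rw [hθk1γ] at this; linarith
        push_cast
        rw [hF1floor]
        linarith
      have hdstβγ : β + γ ≤ dst := by
        by_contra hlt
        push_neg at hlt
        have habs2 : |(t:ℝ) * α - ((⌊(t:ℝ) * α⌋ + 1 : ℤ) : ℝ)| < β + γ := by
          rw [htabs, abs_neg, abs_of_pos hdstpos]; exact hlt
        rcases (key t (⌊(t:ℝ) * α⌋ + 1) ht0 (by omega) (by omega)).2 habs2 with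
          ⟨hteq, hval⟩ | ⟨hteq, hval⟩
        · rw [hθkβ] at hval
          rw [htabs] at hval
          linarith
        · omega
      linarith
  · -- k odd
    have hεval : ε = -1 := by rw [hεdef]; exact Odd.neg_one_pow hpar
    have hθkβ : θk = -β := by rw [hθkε, hεval]; ring
    have hθk1γ : θk1 = γ := by rw [hθk1ε, hεval]; ring
    by_cases hn1 : -1 ≤ q' - qk
    · have hmv : F2 - F1 ≤ β := by
        apply move (q' - qk) hn1 (by omega) β hβpos (⌊(q':ℝ) * α⌋ - pk)
        have hqke : (qk:ℝ) * α = (pk:ℝ) - β := by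
          have := hθkdef; rw [hθkβ] at this; linarith
        push_cast
        rw [hF1floor]
        linarith
      linarith
    · push_neg at hn1
      have hqk3 : 3 ≤ qk := by omega
      have hmv : F2 - F1 ≤ β + γ := by
        apply move (q' - qk + qk1) (by omega) (by omega) (β + γ) (by linarith)
          (⌊(q':ℝ) * α⌋ - pk + pk1)
        have hqke : (qk:ℝ) * α = (pk:ℝ) - β := by
          have := hθkdef; rw [hθkβ] at this; linarith
        have hqk1e : (qk1:ℝ) * α = (pk1:ℝ) + γ := by
          have := hθk1def; rw [hθk1γ] at this; linarith
        push_cast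
        rw [hF1floor]
        linarith
      have hdssβγ : β + γ ≤ dss := by
        by_contra hlt
        push_neg at hlt
        have habs2 : |(s:ℝ) * α - (⌊(s:ℝ) * α⌋ : ℝ)| < β + γ := by
          rw [show (s:ℝ) * α - (⌊(s:ℝ) * α⌋ : ℝ) = dss from hsabs, abs_of_pos hdsspos]
          exact hlt
        rcases (key s ⌊(s:ℝ) * α⌋ hs0 (by omega) (by omega)).2 habs2 with
          ⟨hseq, hval⟩ | ⟨hseq, hval⟩
        · rw [hθkβ] at hval
          rw [hsabs] at hval
          linarith
        · omega
      linarith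
end

section
/- Let α be irrational. If {q'α} and {q''α} are neighboring points in the partition A_k(α) with both in (0,1−α) or both in (1−α,1), then the intersection J_k(q') ∩ J_k(q'') contains a special interval of the form J_{k+8}(q) for some 1 ≤ q ≤ q_{k+9} − 2. -/
open GenContFract

namespace Stmt11Aux

variable {α : ℝ}

noncomputable def qz (α : ℝ) (n : ℕ) : ℤ := ⌊(GenContFract.of α).dens n⌋
noncomputable def pz (α : ℝ) (n : ℕ) : ℤ := ⌊(GenContFract.of α).nums n⌋
noncomputable def eps (α : ℝ) (n : ℕ) : ℝ :=
  (GenContFract.of α).dens n * α - (GenContFract.of α).nums n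
noncomputable def bet (α : ℝ) (n : ℕ) : ℝ := |eps α n|

theorem not_term (hα : Irrational α) (n : ℕ) : ¬(GenContFract.of α).TerminatedAt n := by
  intro h
  obtain ⟨q, hq⟩ := (terminates_iff_rat α).1 ⟨n, h⟩
  exact hα ⟨q, hq.symm⟩

theorem stream_some (hα : Irrational α) (n : ℕ) :
    ∃ ifp, IntFractPair.stream α n = some ifp ∧ ifp.fr ≠ 0 ∧ 0 < ifp.fr ∧ ifp.fr < 1 := by
  have h := not_term hα n
  rw [of_terminatedAt_n_iff_succ_nth_intFractPair_stream_eq_none] at h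
  obtain ⟨ifp', hifp'⟩ := Option.ne_none_iff_exists'.1 h
  obtain ⟨ifp, hs, hfr, -⟩ := IntFractPair.succ_nth_stream_eq_some_iff.1 hifp'
  exact ⟨ifp, hs, hfr, lt_of_le_of_ne (IntFractPair.nth_stream_fr_nonneg hs) (Ne.symm hfr),
    IntFractPair.nth_stream_fr_lt_one hs⟩

theorem s_some (hα : Irrational α) (n : ℕ) :
    ∃ b : ℝ, (GenContFract.of α).s.get? n = some ⟨1, b⟩ ∧ 1 ≤ b ∧ ∃ z : ℤ, b = (z : ℝ) := by
  obtain ⟨gp, hgp⟩ := Option.ne_none_iff_exists'.1 (not_term hα n)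
  obtain ⟨ha, hz⟩ := of_partNum_eq_one_and_exists_int_partDen_eq hgp
  have hb : 1 ≤ gp.b := of_one_le_get?_partDen (partDen_eq_s_b hgp)
  refine ⟨gp.b, ?_, hb, hz⟩
  rwa [show (⟨1, gp.b⟩ : GenContFract.Pair ℝ) = gp by cases gp; simp_all]

theorem den_one_le (hα : Irrational α) (n : ℕ) : 1 ≤ (GenContFract.of α).dens n := by
  have h := succ_nth_fib_le_of_nth_den (v := α) (n := n) (Or.inr (not_term hα _))
  refine le_trans ?_ h
  exact_mod_cast Nat.one_le_cast.2 (Nat.fib_pos.2 n.succ_pos)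

theorem rec_step (hα : Irrational α) (n : ℕ) :
    ∃ b : ℝ, 1 ≤ b ∧ (∃ z : ℤ, b = (z : ℝ)) ∧
      (GenContFract.of α).dens (n + 2) = b * (GenContFract.of α).dens (n + 1) +
        (GenContFract.of α).dens n ∧
      (GenContFract.of α).nums (n + 2) = b * (GenContFract.of α).nums (n + 1) +
        (GenContFract.of α).nums n := by
  obtain ⟨b, hs, hb1, hz⟩ := s_some hα (n + 1)
  refine ⟨b, hb1, hz, ?_, ?_⟩
  · have := dens_recurrence hs rfl rfl
    simpa using this
  · have := nums_recurrence hs rfl rfl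
    simpa using this

theorem den_num_int (hα : Irrational α) (n : ℕ) :
    (∃ z : ℤ, (GenContFract.of α).dens n = (z : ℝ)) ∧
      ∃ z : ℤ, (GenContFract.of α).nums n = (z : ℝ) := by
  induction n using Nat.strong_induction_on with
  | _ n ih =>
    match n with
    | 0 => exact ⟨⟨1, by simp [zeroth_den_eq_one]⟩, ⟨⌊α⌋, by simp [zeroth_num_eq_h, of_h_eq_floor]⟩⟩
    | 1 =>
      constructor
      · obtain ⟨b, hs0, hb1, z, hz⟩ := s_some hα 0
        exact ⟨z, by rw [first_den_eq hs0, hz]⟩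
      · obtain ⟨b, hs0, hb1, z, hz⟩ := s_some hα 0
        refine ⟨z * ⌊α⌋ + 1, ?_⟩
        rw [first_num_eq hs0, of_h_eq_floor, hz]
        push_cast
        ring
    | (n + 2) =>
      obtain ⟨b, hb1, ⟨z, hz⟩, hd, hn⟩ := rec_step hα n
      obtain ⟨⟨z1, h1⟩, ⟨w1, g1⟩⟩ := ih (n+1) (by omega)
      obtain ⟨⟨z0, h0⟩, ⟨w0, g0⟩⟩ := ih n (by omega)
      constructor
      · exact ⟨z * z1 + z0, by rw [hd, hz, h1, h0]; push_cast; ring⟩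
      · exact ⟨z * w1 + w0, by rw [hn, hz, g1, g0]; push_cast; ring⟩

theorem qz_cast (hα : Irrational α) (n : ℕ) : ((qz α n : ℤ) : ℝ) = (GenContFract.of α).dens n := by
  obtain ⟨z, hz⟩ := (den_num_int hα n).1
  rw [qz, hz]; simp

theorem pz_cast (hα : Irrational α) (n : ℕ) : ((pz α n : ℤ) : ℝ) = (GenContFract.of α).nums n := by
  obtain ⟨z, hz⟩ := (den_num_int hα n).2
  rw [pz, hz]; simp

theorem qz_one_le (hα : Irrational α) (n : ℕ) : 1 ≤ qz α n := by
  have := den_one_le hα n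
  rw [← qz_cast hα n] at this
  exact_mod_cast this

theorem qz_mono (hα : Irrational α) {m n : ℕ} (h : m ≤ n) : qz α m ≤ qz α n := by
  have : (GenContFract.of α).dens m ≤ (GenContFract.of α).dens n := by
    have : ∀ i, (GenContFract.of α).dens i ≤ (GenContFract.of α).dens (i + 1) :=
      fun i => of_den_mono
    exact monotone_nat_of_le_succ this h
  rw [← qz_cast hα m, ← qz_cast hα n] at this
  exact_mod_cast this

theorem qz_rec_ineq (hα : Irrational α) (n : ℕ) : qz α (n + 1) + qz α n ≤ qz α (n + 2) := by
  obtain ⟨b, hb1, _, hd, _⟩ := rec_step hα n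
  have h1 : (GenContFract.of α).dens (n+1) + (GenContFract.of α).dens n ≤
      (GenContFract.of α).dens (n + 2) := by
    rw [hd]
    nlinarith [den_one_le hα (n+1), den_one_le hα n]
  rw [← qz_cast hα (n+1), ← qz_cast hα n, ← qz_cast hα (n+2)] at h1
  exact_mod_cast h1

theorem qz_two_le (hα : Irrational α) {n : ℕ} (h : 2 ≤ n) : 2 ≤ qz α n := by
  have h2 : 2 ≤ qz α 2 := by
    have h00 := qz_rec_ineq hα 0
    norm_num at h00
    have := qz_one_le hα 0
    have := qz_one_le hα 1
    omega
  exact le_trans h2 (qz_mono hα h)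

theorem qzα (hα : Irrational α) (n : ℕ) :
    ((qz α n : ℤ) : ℝ) * α = (pz α n : ℤ) + eps α n := by
  rw [qz_cast hα, pz_cast hα, eps]; ring

theorem eps_sign (hα : Irrational α) (n : ℕ) :
    0 < (-1 : ℝ) ^ n * eps α n ∧ (-1 : ℝ) ^ n * eps α n < 1 := by
  obtain ⟨ifp, hst, hfr0, hfrpos, hfrlt⟩ := stream_some hα n
  have hsub := sub_convs_eq hst
  set g := GenContFract.of α
  set B := (g.contsAux (n + 1)).b with hB
  set pB := (g.contsAux n).b with hpB
  have hBden : g.dens n = B := by rw [den_eq_conts_b, nth_cont_eq_succ_nth_contAux]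
  have hB1 : 1 ≤ B := by rw [← hBden]; exact den_one_le hα n
  have hpB0 : 0 ≤ pB := zero_le_of_contsAux_b
  have hfrinv : 1 < ifp.fr⁻¹ := (one_lt_inv₀ hfrpos).2 hfrlt
  have hD : 1 < ifp.fr⁻¹ * B + pB := by nlinarith
  have hconv : g.convs n = g.nums n / g.dens n := conv_eq_num_div_den
  have hBne : B ≠ 0 := by linarith
  have heps : eps α n = (-1) ^ n / (ifp.fr⁻¹ * B + pB) := by
    have h2 : α - g.convs n = (-1) ^ n / (B * (ifp.fr⁻¹ * B + pB)) := by
      simpa [if_neg hfr0] using hsub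
    have : eps α n = B * (α - g.convs n) := by
      rw [hconv, eps, hBden]
      field_simp
      ring
    rw [this, h2]
    field_simp
  have hsq : (-1:ℝ)^n * (-1)^n = 1 := by
    rw [← pow_add]
    exact Even.neg_one_pow ⟨n, rfl⟩
  have hkey : (-1:ℝ) ^ n * eps α n = 1 / (ifp.fr⁻¹ * B + pB) := by
    rw [heps, mul_div_assoc', hsq]
  rw [hkey]
  constructor
  · positivity
  · exact (div_lt_one (by linarith)).2 hD

theorem bet_pos (hα : Irrational α) (n : ℕ) : 0 < bet α n := by
  have h := (eps_sign hα n).1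
  have h0 : eps α n ≠ 0 := by intro h0; rw [h0, mul_zero] at h; exact lt_irrefl _ h
  exact abs_pos.2 h0

theorem bet_eq (hα : Irrational α) (n : ℕ) : bet α n = (-1) ^ n * eps α n := by
  have h := (eps_sign hα n).1
  rw [bet]
  rcases Nat.even_or_odd n with he | ho
  · rw [he.neg_one_pow, one_mul] at h ⊢
    exact abs_of_pos h
  · rw [ho.neg_one_pow] at h ⊢
    have : eps α n < 0 := by linarith
    rw [abs_of_neg this]; ring

theorem bet_lt_one (hα : Irrational α) (n : ℕ) : bet α n < 1 := by
  rw [bet_eq hα]; exact (eps_sign hα n).2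

theorem bet_chain (hα : Irrational α) (n : ℕ) :
    bet α (n + 1) + bet α (n + 2) ≤ bet α n := by
  obtain ⟨b, hb1, _, hd, hn⟩ := rec_step hα n
  have heps : eps α (n + 2) = b * eps α (n + 1) + eps α n := by
    rw [eps, eps, eps, hd, hn]; ring
  have h1 := bet_eq hα n
  have h2 := bet_eq hα (n + 1)
  have h3 := bet_eq hα (n + 2)
  have e1 : eps α n = eps α (n + 2) - b * eps α (n + 1) := by rw [heps]; ring
  have key : bet α n = bet α (n + 2) + b * bet α (n + 1) := by
    rw [h1, h2, h3, e1]
    rw [pow_succ, pow_succ]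
    ring
  nlinarith [bet_pos hα (n + 1)]

theorem bet_anti (hα : Irrational α) {m n : ℕ} (h : m ≤ n) : bet α n ≤ bet α m := by
  have step : ∀ i, bet α (i + 1) ≤ bet α i := fun i => by
    have := bet_chain hα i
    have := bet_pos hα (i + 2)
    linarith
  exact antitone_nat_of_succ_le step h

theorem det_z (hα : Irrational α) (n : ℕ) :
    pz α n * qz α (n + 1) - qz α n * pz α (n + 1) = (-1) ^ (n + 1) := by
  have h := SimpContFract.determinant (s := SimpContFract.of α) (n := n) (not_term hα n)
  have hc : ((SimpContFract.of α : SimpContFract ℝ) : GenContFract ℝ) = GenContFract.of α := rfl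
  rw [hc] at h
  rw [← pz_cast hα n, ← qz_cast hα (n+1), ← qz_cast hα n, ← pz_cast hα (n+1)] at h
  exact_mod_cast h

theorem BA (hα : Irrational α) (n : ℕ) (c m : ℤ) (hc : c ≠ 0) (hlt : |c| < qz α (n + 1)) :
    bet α n ≤ |(c : ℝ) * α - m| := by
  set Δ : ℤ := (-1) ^ (n + 1) with hΔ
  have hdet := det_z hα n
  have hΔsq : Δ * Δ = 1 := by
    rw [hΔ, ← pow_add]
    exact Even.neg_one_pow ⟨n + 1, rfl⟩
  set x : ℤ := Δ * (m * qz α (n+1) - c * pz α (n+1)) with hx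
  set y : ℤ := Δ * (c * pz α n - m * qz α n) with hy
  have hcx : c = x * qz α n + y * qz α (n + 1) := by
    rw [hx, hy]
    have : x * qz α n + y * qz α (n+1) =
        Δ * ((pz α n * qz α (n+1) - qz α n * pz α (n+1)) * c) := by rw [hx, hy]; ring
    rw [this, hdet, ← hΔ, ← mul_assoc, hΔsq, one_mul]
  have hmx : m = x * pz α n + y * pz α (n + 1) := by
    have : x * pz α n + y * pz α (n+1) =
        Δ * ((pz α n * qz α (n+1) - qz α n * pz α (n+1)) * m) := by rw [hx, hy]; ring
    rw [this, hdet, ← hΔ, ← mul_assoc, hΔsq, one_mul]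
  have f1 : eps α n = (qz α n : ℝ) * α - (pz α n : ℝ) := by
    rw [eps, qz_cast hα, pz_cast hα]
  have f2 : eps α (n+1) = (qz α (n+1) : ℝ) * α - (pz α (n+1) : ℝ) := by
    rw [eps, qz_cast hα, pz_cast hα]
  have hexp : (c : ℝ) * α - m = x * eps α n + y * eps α (n + 1) := by
    have hcr : ((c:ℤ):ℝ) = (x:ℝ) * (qz α n : ℝ) + (y:ℝ) * (qz α (n+1) : ℝ) := by
      exact_mod_cast congrArg (Int.cast : ℤ → ℝ) hcx
    have hmr : ((m:ℤ):ℝ) = (x:ℝ) * (pz α n : ℝ) + (y:ℝ) * (pz α (n+1) : ℝ) := by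
      exact_mod_cast congrArg (Int.cast : ℤ → ℝ) hmx
    rw [hcr, hmr, f1, f2]
    ring
  have hQ0 : 1 ≤ qz α n := qz_one_le hα n
  have hQ1 : 1 ≤ qz α (n+1) := qz_one_le hα (n+1)
  rcases eq_or_ne y 0 with hy0 | hy0
  · rw [hy0] at hcx
    have hx0 : x ≠ 0 := by
      intro h0; rw [h0] at hcx; simp at hcx; exact hc hcx
    have h1 : (1:ℝ) ≤ |(x:ℝ)| := by exact_mod_cast Int.one_le_abs hx0
    rw [hexp, hy0]
    push_cast
    rw [zero_mul, add_zero, abs_mul]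
    have := bet_pos hα n
    rw [bet] at this ⊢
    nlinarith
  · rcases eq_or_ne x 0 with hx0 | hx0
    · exfalso
      rw [hx0] at hcx
      simp at hcx
      have : qz α (n+1) ≤ |c| := by
        rw [hcx, abs_mul]
        have h1 : (1:ℤ) ≤ |y| := Int.one_le_abs hy0
        have h2 : |qz α (n+1)| = qz α (n+1) := abs_of_pos (by omega)
        nlinarith
      omega
    · -- both nonzero
      have hxy : x * y < 0 := by
        rcases lt_trichotomy x 0 with hx | hx | hx
        · rcases lt_trichotomy y 0 with hy | hy | hy
          · exfalso
            have h2 : c ≤ -(qz α n + qz α (n+1)) := by nlinarith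
            have h3 : -c ≤ |c| := neg_le_abs c
            omega
          · exact absurd hy hy0
          · exact mul_neg_of_neg_of_pos hx hy
        · exact absurd hx hx0
        · rcases lt_trichotomy y 0 with hy | hy | hy
          · exact mul_neg_of_pos_of_neg hx hy
          · exact absurd hy hy0
          · exfalso
            have : qz α n + qz α (n+1) ≤ c := by nlinarith
            have habs : c ≤ |c| := le_abs_self c
            omega
      -- epsilons have opposite signs
      set t : ℝ := (-1) ^ n with htdef
      have ht2 : t * t = 1 := by
        rw [htdef, ← pow_add]
        exact Even.neg_one_pow ⟨n, rfl⟩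
      have s1 : 0 < t * eps α n := (eps_sign hα n).1
      have s2 : 0 < -(t * eps α (n+1)) := by
        have := (eps_sign hα (n+1)).1
        rw [pow_succ] at this
        nlinarith
      have hee : eps α n * eps α (n+1) < 0 := by nlinarith
      have hxyR : (x:ℝ) * (y:ℝ) < 0 := by exact_mod_cast hxy
      set a := (x:ℝ) * eps α n with ha
      set b := (y:ℝ) * eps α (n+1) with hb
      have hab : 0 < a * b := by
        have : a * b = ((x:ℝ) * (y:ℝ)) * (eps α n * eps α (n+1)) := by rw [ha, hb]; ring
        rw [this]
        exact mul_pos_of_neg_of_neg hxyR hee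
      have h1 : (1:ℝ) ≤ |(x:ℝ)| := by exact_mod_cast Int.one_le_abs hx0
      have haabs : bet α n ≤ |a| := by
        rw [ha, abs_mul, bet]
        nlinarith [abs_nonneg (eps α n)]
      have : |a| ≤ |a + b| := by
        rcases lt_trichotomy a 0 with haz | haz | haz
        · have hbz : b < 0 := by nlinarith
          rw [abs_of_neg haz, abs_of_neg (by linarith : a + b < 0)]
          linarith
        · exfalso; rw [haz] at hab; simp at hab
        · have hbz : 0 < b := by nlinarith
          rw [abs_of_pos haz, abs_of_pos (by linarith : 0 < a + b)]
          linarith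
      rw [hexp]
      calc bet α n ≤ |a| := haabs
        _ ≤ |a + b| := this
        _ = |(x:ℝ) * eps α n + (y:ℝ) * eps α (n+1)| := by rw [ha, hb]

theorem fract_pos' (hα : Irrational α) (c : ℤ) (hc : c ≠ 0) : 0 < Int.fract ((c : ℝ) * α) := by
  have hirr : Irrational ((c : ℝ) * α) := hα.intCast_mul hc
  have : Int.fract ((c : ℝ) * α) ≠ 0 := by
    intro h
    have := Int.self_sub_floor ((c : ℝ) * α)
    rw [h] at this
    exact hirr.ne_int ⌊(c : ℝ) * α⌋ (by linarith)
  exact lt_of_le_of_ne (Int.fract_nonneg _) (Ne.symm this)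

theorem fract_eq_of (c : ℤ) (x : ℝ) (z : ℤ) (h : (c : ℝ) * α = x + z) (h0 : 0 ≤ x) (h1 : x < 1) :
    Int.fract ((c : ℝ) * α) = x := by
  rw [h, Int.fract_add_intCast, Int.fract_eq_self.2 ⟨h0, h1⟩]

theorem BA_fract (hα : Irrational α) (n : ℕ) (c : ℤ) (hc : c ≠ 0) (h : |c| < qz α (n + 1)) :
    bet α n ≤ Int.fract ((c : ℝ) * α) ∧ bet α n ≤ 1 - Int.fract ((c : ℝ) * α) := by
  have hfr : Int.fract ((c:ℝ)*α) = (c:ℝ)*α - ⌊(c:ℝ)*α⌋ := (Int.self_sub_floor _).symm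
  constructor
  · have hb := BA hα n c ⌊(c:ℝ)*α⌋ hc h
    rwa [abs_of_nonneg (by rw [← hfr]; exact Int.fract_nonneg _), ← hfr] at hb
  · have hb := BA hα n c (⌊(c:ℝ)*α⌋ + 1) hc h
    have he : (c:ℝ)*α - ((⌊(c:ℝ)*α⌋ : ℤ) + 1 : ℤ) = Int.fract ((c:ℝ)*α) - 1 := by
      rw [hfr]; push_cast; ring
    rw [he, abs_of_neg (by have := Int.fract_lt_one ((c:ℝ)*α); linarith)] at hb
    linarith

theorem eps_mul_neg (hα : Irrational α) (n : ℕ) : eps α n * eps α (n + 1) < 0 := by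
  set t : ℝ := (-1) ^ n with htdef
  have ht2 : t * t = 1 := by
    rw [htdef, ← pow_add]
    exact Even.neg_one_pow ⟨n, rfl⟩
  have s1 : 0 < t * eps α n := (eps_sign hα n).1
  have s2 : 0 < -(t * eps α (n+1)) := by
    have := (eps_sign hα (n+1)).1
    rw [pow_succ] at this
    nlinarith
  nlinarith

theorem qz_gap (hα : Irrational α) (n : ℕ) (h3 : 3 ≤ n) :
    2 ≤ qz α (n + 1) - qz α n ∧ qz α n + 2 ≤ qz α (n + 1) := by
  obtain ⟨m, rfl⟩ := Nat.exists_eq_add_of_le h3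
  have h1 : qz α (m + 3) + qz α (m + 2) ≤ qz α (m + 4) := qz_rec_ineq hα (m + 2)
  have h2 : 2 ≤ qz α (m + 2) := qz_two_le hα (by omega)
  rw [show 3 + m = m + 3 from by omega, show m + 3 + 1 = m + 4 from by omega]
  omega

theorem bet_sum_lt_one (hα : Irrational α) {n : ℕ} (h : 1 ≤ n) :
    bet α n + bet α (n + 1) < 1 := by
  obtain ⟨m, rfl⟩ := Nat.exists_eq_add_of_le' h
  have hc := bet_chain hα m
  have hlt := bet_lt_one hα m
  rw [show m + 1 + 1 = m + 2 from rfl]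
  linarith

theorem small_large (hα : Irrational α) (n : ℕ) (h3 : 3 ≤ n) :
    (∃ w : ℤ, 1 ≤ w ∧ w ≤ qz α (n + 1) - 2 ∧
      Int.fract ((w : ℝ) * α) ≤ bet α n + bet α (n + 1)) ∧
    (∃ w : ℤ, 1 ≤ w ∧ w ≤ qz α (n + 1) - 2 ∧
      1 - Int.fract ((w : ℝ) * α) ≤ bet α n + bet α (n + 1)) := by
  obtain ⟨hgap1, hgap2⟩ := qz_gap hα n h3
  have hq1 : 1 ≤ qz α n := qz_one_le hα n
  have hq2 : 2 ≤ qz α n := qz_two_le hα (by omega)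
  have hbetpos := bet_pos hα n
  have hbetpos1 := bet_pos hα (n + 1)
  have hlt1 : bet α n < 1 := bet_lt_one hα n
  have hsum1 : bet α n + bet α (n + 1) < 1 := bet_sum_lt_one hα (by omega)
  have hb1 := bet_eq hα n
  have hb2 := bet_eq hα (n + 1)
  have hmul := eps_mul_neg hα n
  have habs1 : |eps α n| = bet α n := rfl
  have habs2 : |eps α (n+1)| = bet α (n+1) := rfl
  have hene : eps α n ≠ 0 := by intro h; rw [bet, h, abs_zero] at hbetpos; linarith
  have he1 := qzα hα n
  have he2 := qzα hα (n + 1)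
  rcases lt_or_gt_of_ne hene with hneg | hpos
  · -- eps n < 0, eps (n+1) > 0
    have hpos1 : 0 < eps α (n + 1) := by nlinarith [hmul]
    have hbn : bet α n = -eps α n := abs_of_neg hneg
    have hbn1 : bet α (n+1) = eps α (n+1) := abs_of_pos hpos1
    constructor
    · refine ⟨qz α (n+1) - qz α n, by omega, by omega, ?_⟩
      have hval : ((qz α (n+1) - qz α n : ℤ) : ℝ) * α =
          (eps α (n+1) - eps α n) + ((pz α (n+1) - pz α n : ℤ) : ℝ) := by
        push_cast
        linear_combination he2 - he1
      rw [fract_eq_of _ _ _ hval (by linarith) (by linarith)]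
      linarith
    · refine ⟨qz α n, by omega, by omega, ?_⟩
      have hval : ((qz α n : ℤ) : ℝ) * α = (1 + eps α n) + ((pz α n - 1 : ℤ) : ℝ) := by
        push_cast
        linear_combination he1
      rw [fract_eq_of _ _ _ hval (by linarith) (by linarith)]
      linarith
  · -- eps n > 0, eps (n+1) < 0
    have hneg1 : eps α (n + 1) < 0 := by nlinarith [hmul]
    have hbn : bet α n = eps α n := abs_of_pos hpos
    have hbn1 : bet α (n+1) = -eps α (n+1) := abs_of_neg hneg1
    constructor
    · refine ⟨qz α n, by omega, by omega, ?_⟩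
      have hval : ((qz α n : ℤ) : ℝ) * α = eps α n + ((pz α n : ℤ) : ℝ) := by
        push_cast
        linear_combination he1
      rw [fract_eq_of _ _ _ hval (by linarith) (by linarith)]
      linarith
    · refine ⟨qz α (n+1) - qz α n, by omega, by omega, ?_⟩
      have hval : ((qz α (n+1) - qz α n : ℤ) : ℝ) * α =
          (1 + eps α (n+1) - eps α n) + ((pz α (n+1) - pz α n - 1 : ℤ) : ℝ) := by
        push_cast
        linear_combination he2 - he1
      rw [fract_eq_of _ _ _ hval (by linarith) (by linarith)]
      linarith

theorem gen_plus (hα : Irrational α) (n : ℕ) (h3 : 3 ≤ n) :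
    ∃ e : ℤ, ∃ δ : ℝ, ∃ z : ℤ, 2 ≤ e ∧ e ≤ qz α (n + 1) ∧ (e : ℝ) * α = δ + (z : ℝ) ∧
      bet α n ≤ δ ∧ δ ≤ bet α n + bet α (n + 1) := by
  obtain ⟨hgap1, hgap2⟩ := qz_gap hα n h3
  have hq2 : 2 ≤ qz α n := qz_two_le hα (by omega)
  have hbetpos := bet_pos hα n
  have hbetpos1 := bet_pos hα (n + 1)
  have hmul := eps_mul_neg hα n
  have hene : eps α n ≠ 0 := by
    intro h; have := bet_pos hα n; rw [bet, h, abs_zero] at this; linarith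
  have he1 := qzα hα n
  have he2 := qzα hα (n + 1)
  rcases lt_or_gt_of_ne hene with hneg | hpos
  · have hpos1 : 0 < eps α (n + 1) := by nlinarith [hmul]
    have hbn : bet α n = -eps α n := abs_of_neg hneg
    have hbn1 : bet α (n+1) = eps α (n+1) := abs_of_pos hpos1
    refine ⟨qz α (n+1) - qz α n, eps α (n+1) - eps α n, pz α (n+1) - pz α n,
      by omega, by omega, ?_, by linarith, by linarith⟩
    push_cast
    linear_combination he2 - he1
  · have hneg1 : eps α (n + 1) < 0 := by nlinarith [hmul]
    have hbn : bet α n = eps α n := abs_of_pos hpos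
    refine ⟨qz α n, eps α n, pz α n, by omega, by omega, ?_, by linarith, ?_⟩
    · push_cast; linear_combination he1
    · have hbn1 : bet α (n+1) = -eps α (n+1) := abs_of_neg hneg1
      linarith

end Stmt11Aux

set_option maxHeartbeats 2000000
open Stmt11Aux

/-- If {q'α} and {q''α} are neighboring points in the partition A_k(α), both in (0,1−α) or both
in (1−α,1), then J_k(q') ∩ J_k(q'') contains a special interval J_{k+8}(q) for some
1 ≤ q ≤ q_{k+9} − 2.  The gaps d*, d** (resp. d*₈, d**₈) of the partition at level k
(resp. k+8) are characterized as least elements. -/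
theorem stmt11 (α : ℝ) (hα : Irrational α) (h0 : 0 < α) (h1 : α < 1)
    (k : ℕ) (hk : 1 ≤ k) (dst dss dst8 dss8 : ℝ)
    (hdss : IsLeast {x : ℝ | ∃ q : ℤ, -1 ≤ q ∧ (q : ℝ) ≤ cfq α (k + 1) - 2 ∧ q ≠ 0 ∧
      Int.fract ((q : ℝ) * α) = x} dss)
    (hdst : IsLeast {x : ℝ | ∃ q : ℤ, -1 ≤ q ∧ (q : ℝ) ≤ cfq α (k + 1) - 2 ∧ q ≠ 0 ∧
      1 - Int.fract ((q : ℝ) * α) = x} dst)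
    (hdss8 : IsLeast {x : ℝ | ∃ q : ℤ, -1 ≤ q ∧ (q : ℝ) ≤ cfq α (k + 9) - 2 ∧ q ≠ 0 ∧
      Int.fract ((q : ℝ) * α) = x} dss8)
    (hdst8 : IsLeast {x : ℝ | ∃ q : ℤ, -1 ≤ q ∧ (q : ℝ) ≤ cfq α (k + 9) - 2 ∧ q ≠ 0 ∧
      1 - Int.fract ((q : ℝ) * α) = x} dst8)
    (q' q'' : ℤ) (hq'1 : 1 ≤ q') (hq'2 : (q' : ℝ) ≤ cfq α (k + 1) - 2)
    (hq''1 : 1 ≤ q'') (hq''2 : (q'' : ℝ) ≤ cfq α (k + 1) - 2)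
    (horder : Int.fract ((q' : ℝ) * α) < Int.fract ((q'' : ℝ) * α))
    (hneighbor : ∀ q : ℤ, -1 ≤ q → (q : ℝ) ≤ cfq α (k + 1) - 2 →
      Int.fract ((q : ℝ) * α) ∉ Set.Ioo (Int.fract ((q' : ℝ) * α)) (Int.fract ((q'' : ℝ) * α)))
    (hside : (Int.fract ((q' : ℝ) * α) ∈ Set.Ioo 0 (1 - α) ∧
        Int.fract ((q'' : ℝ) * α) ∈ Set.Ioo 0 (1 - α)) ∨
      (Int.fract ((q' : ℝ) * α) ∈ Set.Ioo (1 - α) 1 ∧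
        Int.fract ((q'' : ℝ) * α) ∈ Set.Ioo (1 - α) 1)) :
    ∃ q : ℤ, 1 ≤ q ∧ (q : ℝ) ≤ cfq α (k + 9) - 2 ∧
      Set.Ico (Int.fract ((q : ℝ) * α) - dss8) (Int.fract ((q : ℝ) * α) + dst8) ⊆
        Set.Ico (Int.fract ((q' : ℝ) * α) - dss) (Int.fract ((q' : ℝ) * α) + dst) ∩
          Set.Ico (Int.fract ((q'' : ℝ) * α) - dss) (Int.fract ((q'' : ℝ) * α) + dst) := by
  classical
  obtain ⟨Q, hQdef⟩ : ∃ n : ℤ, qz α (k + 1) = n := ⟨_, rfl⟩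
  obtain ⟨Q8, hQ8def⟩ : ∃ n : ℤ, qz α (k + 8) = n := ⟨_, rfl⟩
  obtain ⟨Q9, hQ9def⟩ : ∃ n : ℤ, qz α (k + 9) = n := ⟨_, rfl⟩
  have hcfq1 : cfq α (k + 1) = ((Q : ℤ) : ℝ) := by rw [← hQdef]; exact (qz_cast hα (k + 1)).symm
  have hcfq9 : cfq α (k + 9) = ((Q9 : ℤ) : ℝ) := by rw [← hQ9def]; exact (qz_cast hα (k + 9)).symm
  set u := Int.fract ((q' : ℝ) * α) with hu
  set v := Int.fract ((q'' : ℝ) * α) with hv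
  -- beta abbreviations
  set b0 := bet α k with hb0
  set b1 := bet α (k + 1) with hb1
  set b2 := bet α (k + 2) with hb2
  set b3 := bet α (k + 3) with hb3
  set b4 := bet α (k + 4) with hb4
  set b5 := bet α (k + 5) with hb5
  set b6 := bet α (k + 6) with hb6
  set b7 := bet α (k + 7) with hb7
  set b8 := bet α (k + 8) with hb8
  set b9 := bet α (k + 9) with hb9
  have p0 : 0 < b0 := bet_pos hα k
  have p1 : 0 < b1 := bet_pos hα (k+1)
  have p2 : 0 < b2 := bet_pos hα (k+2)
  have p7 : 0 < b7 := bet_pos hα (k+7)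
  have p8 : 0 < b8 := bet_pos hα (k+8)
  have p9 : 0 < b9 := bet_pos hα (k+9)
  have p10 : 0 < bet α (k+10) := bet_pos hα (k+10)
  have c0 : b1 + b2 ≤ b0 := bet_chain hα k
  have c2 : b3 + b4 ≤ b2 := bet_chain hα (k+2)
  have c3 : b4 + b5 ≤ b3 := bet_chain hα (k+3)
  have c4c : b5 + b6 ≤ b4 := bet_chain hα (k+4)
  have c5 : b6 + b7 ≤ b5 := bet_chain hα (k+5)
  have c6 : b7 + b8 ≤ b6 := bet_chain hα (k+6)
  have c7 : b8 + b9 ≤ b7 := bet_chain hα (k+7)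
  have c8 : b9 + bet α (k+10) ≤ b8 := bet_chain hα (k+8)
  have h72 : 8 * b7 + 5 * b8 ≤ b2 := by nlinarith
  have h98 : b9 < b8 := by linarith
  -- integer bounds on q', q''
  have hq'2' : q' ≤ Q - 2 := by
    have h := hq'2; rw [hcfq1] at h
    have : (q' : ℝ) ≤ ((Q - 2 : ℤ) : ℝ) := by push_cast; linarith
    exact_mod_cast this
  have hq''2' : q'' ≤ Q - 2 := by
    have h := hq''2; rw [hcfq1] at h
    have : (q'' : ℝ) ≤ ((Q - 2 : ℤ) : ℝ) := by push_cast; linarith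
    exact_mod_cast this
  have hQ3 : 3 ≤ Q := by omega
  have hQQ9 : Q ≤ Q9 := by
    have h := qz_mono hα (show k + 1 ≤ k + 9 by omega)
    rwa [hQdef, hQ9def] at h
  have hgap9 : Q8 + 2 ≤ Q9 := by
    have h := (qz_gap hα (k + 8) (by omega)).2
    rwa [show k + 8 + 1 = k + 9 from rfl, hQ8def, hQ9def] at h
  have hQ8Q : Q ≤ Q8 := by
    have h := qz_mono hα (show k + 1 ≤ k + 8 by omega)
    rwa [hQdef, hQ8def] at h
  -- membership helper for the level-(k+1) set
  have memk : ∀ c : ℤ, -1 ≤ c → c ≤ Q - 2 → c ≠ 0 →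
      Int.fract ((c : ℝ) * α) ∈ {x : ℝ | ∃ q : ℤ, -1 ≤ q ∧ (q : ℝ) ≤ cfq α (k + 1) - 2 ∧
        q ≠ 0 ∧ Int.fract ((q : ℝ) * α) = x} := by
    intro c hc1 hc2 hc0
    refine ⟨c, hc1, ?_, hc0, rfl⟩
    rw [hcfq1]
    have : ((c : ℤ) : ℝ) ≤ ((Q - 2 : ℤ) : ℝ) := by exact_mod_cast hc2
    push_cast at this ⊢
    linarith
  have mem9 : ∀ c : ℤ, -1 ≤ c → c ≤ Q9 - 2 → c ≠ 0 →
      Int.fract ((c : ℝ) * α) ∈ {x : ℝ | ∃ q : ℤ, -1 ≤ q ∧ (q : ℝ) ≤ cfq α (k + 9) - 2 ∧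
        q ≠ 0 ∧ Int.fract ((q : ℝ) * α) = x} := by
    intro c hc1 hc2 hc0
    refine ⟨c, hc1, ?_, hc0, rfl⟩
    rw [hcfq9]
    have : ((c : ℤ) : ℝ) ≤ ((Q9 - 2 : ℤ) : ℝ) := by exact_mod_cast hc2
    push_cast at this ⊢
    linarith
  -- basic bounds on u, v
  have hu0 : 0 < u := fract_pos' hα q' (by omega)
  have hv0 : 0 < v := fract_pos' hα q'' (by omega)
  have hu1 : u < 1 := Int.fract_lt_one _
  have hv1 : v < 1 := Int.fract_lt_one _
  have hufloor : u = (q' : ℝ) * α - ⌊(q' : ℝ) * α⌋ := (Int.self_sub_floor _).symm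
  have hvfloor : v = (q'' : ℝ) * α - ⌊(q'' : ℝ) * α⌋ := (Int.self_sub_floor _).symm
  -- dss/dst membership bounds
  have dss_le_u : dss ≤ u := hdss.2 ⟨q', by omega, by rw [hcfq1]; push_cast; push_cast at hq'2'; linarith [hq'2], by omega, rfl⟩
  have dss_le_v : dss ≤ v := hdss.2 ⟨q'', by omega, by rw [hcfq1]; linarith [hq''2, hcfq1 ▸ hq''2], by omega, rfl⟩
  have dst_le_1u : dst ≤ 1 - u := hdst.2 ⟨q', by omega, by rw [hcfq1]; linarith [hcfq1 ▸ hq'2], by omega, rfl⟩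
  have dst_le_1v : dst ≤ 1 - v := hdst.2 ⟨q'', by omega, by rw [hcfq1]; linarith [hcfq1 ▸ hq''2], by omega, rfl⟩
  -- witnesses for dss, dst, and their floor forms
  obtain ⟨s, hs1, hs2r, hs0, hsv⟩ := hdss.1
  obtain ⟨r, hr1, hr2r, hr0, hrv⟩ := hdst.1
  have hs2 : s ≤ Q - 2 := by
    rw [hcfq1] at hs2r
    have : (s : ℝ) ≤ ((Q - 2 : ℤ) : ℝ) := by push_cast; linarith
    exact_mod_cast this
  have hr2 : r ≤ Q - 2 := by
    rw [hcfq1] at hr2r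
    have : (r : ℝ) ≤ ((Q - 2 : ℤ) : ℝ) := by push_cast; linarith
    exact_mod_cast this
  have hsfloor : dss = (s : ℝ) * α - ⌊(s : ℝ) * α⌋ := by
    rw [← hsv]; exact (Int.self_sub_floor _).symm
  -- lower bounds at level k
  have habs_s : |s| < qz α (k + 1) := by
    rw [hQdef]
    have : |s| ≤ Q - 2 := abs_le.2 ⟨by omega, hs2⟩
    omega
  have dss_lb : b0 ≤ dss := by
    have h := (BA_fract hα k s hs0 habs_s).1
    rwa [hsv] at h
  have habs_r : |r| < qz α (k + 1) := by
    rw [hQdef]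
    have : |r| ≤ Q - 2 := abs_le.2 ⟨by omega, hr2⟩
    omega
  have dst_lb : b0 ≤ dst := by
    have h := (BA_fract hα k r hr0 habs_r).2
    rwa [hrv] at h
  -- g := v - u
  have hg0 : 0 < v - u := by linarith
  have hqdne : q'' - q' ≠ 0 := by
    intro h
    have he : q'' = q' := by omega
    have : v = u := by rw [hu, hv, he]
    linarith
  have hgval : Int.fract (((q'' - q' : ℤ) : ℝ) * α) = v - u := by
    apply fract_eq_of _ _ (⌊(q'' : ℝ) * α⌋ - ⌊(q' : ℝ) * α⌋)
    · push_cast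
      linear_combination hufloor - hvfloor
    · linarith
    · linarith
  have hg_lb : b0 ≤ v - u := by
    have habs : |q'' - q'| < qz α (k + 1) := by
      rw [hQdef]
      have : |q'' - q'| ≤ Q - 2 := abs_le.2 ⟨by omega, by omega⟩
      omega
    have h := (BA_fract hα k (q'' - q') hqdne habs).1
    rwa [hgval] at h
  -- level-(k+8) lower bounds for dss8, dst8
  obtain ⟨s8, hs81, hs82r, hs80, hs8v⟩ := hdss8.1
  obtain ⟨r8, hr81, hr82r, hr80, hr8v⟩ := hdst8.1
  have hs82 : s8 ≤ Q9 - 2 := by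
    rw [hcfq9] at hs82r
    have : (s8 : ℝ) ≤ ((Q9 - 2 : ℤ) : ℝ) := by push_cast; linarith
    exact_mod_cast this
  have hr82 : r8 ≤ Q9 - 2 := by
    rw [hcfq9] at hr82r
    have : (r8 : ℝ) ≤ ((Q9 - 2 : ℤ) : ℝ) := by push_cast; linarith
    exact_mod_cast this
  have dss8_lb : b8 ≤ dss8 := by
    have habs : |s8| < qz α (k + 8 + 1) := by
      rw [show k + 8 + 1 = k + 9 from rfl, hQ9def]
      have : |s8| ≤ Q9 - 2 := abs_le.2 ⟨by omega, hs82⟩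
      omega
    have h := (BA_fract hα (k + 8) s8 hs80 habs).1
    rwa [hs8v] at h
  have dst8_lb : b8 ≤ dst8 := by
    have habs : |r8| < qz α (k + 8 + 1) := by
      rw [show k + 8 + 1 = k + 9 from rfl, hQ9def]
      have : |r8| ≤ Q9 - 2 := abs_le.2 ⟨by omega, hr82⟩
      omega
    have h := (BA_fract hα (k + 8) r8 hr80 habs).2
    rwa [hr8v] at h
  -- upper bounds for dss8, dst8 via small_large at level k+8
  obtain ⟨⟨wp, hwp1, hwp2, hwpv⟩, ⟨wm, hwm1, hwm2, hwmv⟩⟩ := small_large hα (k + 8) (by omega)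
  have hwp2' : wp ≤ Q9 - 2 := by
    rw [show k + 8 + 1 = k + 9 from rfl, hQ9def] at hwp2
    omega
  have hwm2' : wm ≤ Q9 - 2 := by
    rw [show k + 8 + 1 = k + 9 from rfl, hQ9def] at hwm2
    omega
  have dss8_ub : dss8 ≤ b8 + b9 := by
    have hmem := mem9 wp (by omega) hwp2' (by omega)
    exact le_trans (hdss8.2 hmem) hwpv
  have dst8_ub : dst8 ≤ b8 + b9 := by
    refine le_trans (hdst8.2 ⟨wm, by omega, ?_, by omega, rfl⟩) hwmv
    rw [hcfq9]
    have : ((wm : ℤ) : ℝ) ≤ ((Q9 - 2 : ℤ) : ℝ) := by exact_mod_cast hwm2'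
    push_cast at this ⊢
    linarith
  -- the gap bound:  v - u ≤ dss + b1
  have hC : v - u ≤ dss + b1 := by
    by_contra hgt
    push_neg at hgt
    have hdss_lt_g : dss < v - u := by linarith
    have he1 := qzα hα (k + 1)
    have he1' : ((Q : ℤ) : ℝ) * α = ((pz α (k + 1) : ℤ) : ℝ) + eps α (k + 1) := by
      rw [← hQdef]; exact he1
    have heps1a : eps α (k + 1) ≤ b1 := le_abs_self _
    have heps1b : -b1 ≤ eps α (k + 1) := neg_abs_le _
    set c4 : ℤ := q' + s with hc4def
    rcases eq_or_ne c4 0 with hc40 | hc4ne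
    · -- s = -q'
      have hsq : s = -q' := by omega
      have hdssval : dss = 1 - u := by
        rw [← hsv, hsq]
        have : ((-q' : ℤ) : ℝ) * α = -((q' : ℝ) * α) := by push_cast; ring
        rw [this, Int.fract_neg (by rw [← hu]; linarith)]
      linarith
    · rcases le_or_gt c4 (Q - 2) with hc4le | hc4gt
      · -- c4 in range
        have hval : Int.fract ((c4 : ℝ) * α) = u + dss := by
          apply fract_eq_of _ _ (⌊(q' : ℝ) * α⌋ + ⌊(s : ℝ) * α⌋)
          · rw [hc4def]
            push_cast
            linear_combination -hufloor - hsfloor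
          · linarith
          · linarith
        have := hneighbor c4 (by omega) (by
          rw [hcfq1]
          have : ((c4 : ℤ) : ℝ) ≤ ((Q - 2 : ℤ) : ℝ) := by exact_mod_cast hc4le
          push_cast at this ⊢
          linarith)
        rw [hval] at this
        exact this (Set.mem_Ioo.2 ⟨by linarith, by linarith⟩)
      · -- c4 ≥ Q - 1 : subtract Q
        set c4' : ℤ := c4 - Q with hc4'def
        have hval : Int.fract ((c4' : ℝ) * α) = u + dss - eps α (k + 1) := by
          apply fract_eq_of _ _ (⌊(q' : ℝ) * α⌋ + ⌊(s : ℝ) * α⌋ - pz α (k + 1))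
          · rw [hc4'def, hc4def]
            push_cast
            linear_combination -hufloor - hsfloor - he1'
          · linarith
          · linarith
        have hin : u + dss - eps α (k + 1) ∈ Set.Ioo u v :=
          Set.mem_Ioo.2 ⟨by linarith, by linarith⟩
        rcases eq_or_ne c4' 0 with h0 | hne
        · rw [h0] at hval
          norm_num at hval
          linarith
        · have := hneighbor c4' (by omega) (by
            rw [hcfq1]
            have hle : c4' ≤ Q - 2 := by omega
            have : ((c4' : ℤ) : ℝ) ≤ ((Q - 2 : ℤ) : ℝ) := by exact_mod_cast hle
            push_cast at this ⊢
            linarith)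
          rw [hval] at this
          exact this hin
  -- define L and R
  set L := v - dss + dss8 with hLdef
  set R := u + dst - dst8 with hRdef
  have hLR : L + 8 * b7 + b8 ≤ R := by
    have : R - L = dss + dst - (v - u) - dss8 - dst8 := by rw [hLdef, hRdef]; ring
    linarith [hC, dst_lb, c0, h72, dss8_ub, dst8_ub, h98]
  have hR1 : R < 1 := by
    have : 0 < dst8 := by linarith
    linarith
  have hL0 : 0 < L := by
    have : 0 < dss8 := by linarith
    linarith
  have hanti27 : b7 ≤ b2 := bet_anti hα (by omega)
  have hL1 : L < 1 := by
    have hdss8small : dss8 ≤ dss := by linarith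
    linarith
  -- generator for the climb
  obtain ⟨e, δ, ze, he2, heQ8, heα, hδ1, hδ2⟩ := gen_plus hα (k + 7) (by omega)
  have heQ8' : e ≤ Q8 := by
    rw [show k + 7 + 1 = k + 8 from rfl, hQ8def] at heQ8
    exact heQ8
  have he_le : e ≤ Q9 - 2 := by omega
  have he9a : eps α (k + 9) ≤ b9 := le_abs_self _
  have he9b : -b9 ≤ eps α (k + 9) := neg_abs_le _
  have hq9α : ((Q9 : ℤ) : ℝ) * α = ((pz α (k + 9) : ℤ) : ℝ) + eps α (k + 9) := by
    rw [← hQ9def]; exact qzα hα (k + 9)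
  -- the climb
  have climb : ∀ n : ℕ, ∀ w : ℤ, (w = -1 ∨ (1 ≤ w ∧ w ≤ Q9 - 2)) →
      Int.fract ((w : ℝ) * α) < L → L - Int.fract ((w : ℝ) * α) ≤ n * b8 →
      ∃ q : ℤ, (1 ≤ q ∧ q ≤ Q9 - 2) ∧ L ≤ Int.fract ((q : ℝ) * α) ∧
        Int.fract ((q : ℝ) * α) ≤ R := by
    intro n
    induction n with
    | zero =>
      intro w hw hlt hbd
      exfalso
      norm_num at hbd
      linarith
    | succ n ih =>
      intro w hw hlt hbd
      have hw0 : w ≠ 0 := by rcases hw with h | h <;> omega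
      have hwle : w ≤ Q9 - 2 := by rcases hw with h | h <;> omega
      have hwge : -1 ≤ w := by rcases hw with h | h <;> omega
      have hτ0 : 0 < Int.fract ((w : ℝ) * α) := fract_pos' hα w hw0
      have hτfl : Int.fract ((w : ℝ) * α) = (w : ℝ) * α - ⌊(w : ℝ) * α⌋ :=
        (Int.self_sub_floor _).symm
      set τ := Int.fract ((w : ℝ) * α) with hτdef
      have hτ1 : τ < 1 := Int.fract_lt_one _
      have hy1val : Int.fract (((w + e : ℤ) : ℝ) * α) = τ + δ := by
        apply fract_eq_of _ _ (⌊(w : ℝ) * α⌋ + ze)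
        · push_cast
          linear_combination -hτfl + heα
        · linarith
        · linarith
      have hbd' : L - τ ≤ (n + 1 : ℕ) * b8 := hbd
      have hbdn : (((n + 1 : ℕ)) : ℝ) * b8 = (n : ℝ) * b8 + b8 := by push_cast; ring
      rcases le_or_gt (w + e) (Q9 - 2) with hin | hout
      · rcases le_or_gt L (τ + δ) with hstop | hcont
        · exact ⟨w + e, ⟨by omega, hin⟩, by rw [hy1val]; exact hstop,
            by rw [hy1val]; linarith⟩
        · refine ih (w + e) (Or.inr ⟨by omega, hin⟩) (by rw [hy1val]; exact hcont) ?_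
          rw [hy1val]
          rw [hbdn] at hbd'
          linarith
      · -- overflow: subtract Q9
        set w2 : ℤ := w + e - Q9 with hw2def
        have hy2val : Int.fract ((w2 : ℝ) * α) = τ + δ - eps α (k + 9) := by
          apply fract_eq_of _ _ (⌊(w : ℝ) * α⌋ + ze - pz α (k + 9))
          · rw [hw2def]
            push_cast
            linear_combination -hτfl + heα - hq9α
          · linarith
          · linarith
        have hw2a : -1 ≤ w2 := by omega
        have hw2b : w2 ≤ Q9 - 2 := by omega
        have hw2ne : w2 ≠ 0 := by
          intro h0
          rw [h0] at hy2val
          norm_num at hy2val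
          linarith
        have hst : w2 = -1 ∨ (1 ≤ w2 ∧ w2 ≤ Q9 - 2) := by omega
        rcases le_or_gt L (τ + δ - eps α (k + 9)) with hstop | hcont
        · rcases hst with hm1 | hpos2
          · -- landed exactly on -1 : take one more step
            have hy2fl : Int.fract ((w2 : ℝ) * α) = (w2 : ℝ) * α - ⌊(w2 : ℝ) * α⌋ :=
              (Int.self_sub_floor _).symm
            have hy3val : Int.fract (((w2 + e : ℤ) : ℝ) * α) =
                (τ + δ - eps α (k + 9)) + δ := by
              apply fract_eq_of _ _ (⌊(w2 : ℝ) * α⌋ + ze)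
              · push_cast
                rw [hy2val] at hy2fl
                linear_combination -hy2fl + heα
              · linarith
              · linarith
            refine ⟨w2 + e, ⟨by omega, by omega⟩, ?_, ?_⟩
            · rw [hy3val]; linarith
            · rw [hy3val]; linarith
          · exact ⟨w2, hpos2, by rw [hy2val]; exact hstop, by rw [hy2val]; linarith⟩
        · refine ih w2 hst (by rw [hy2val]; exact hcont) ?_
          rw [hy2val]
          rw [hbdn] at hbd'
          linarith
  -- starting point
  have hx1 : 0 < v - dss := by linarith
  have hx1L : v - dss < L := by linarith
  set w0 : ℤ := q'' - s with hw0def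
  have hx1val : Int.fract ((w0 : ℝ) * α) = v - dss := by
    apply fract_eq_of _ _ (⌊(q'' : ℝ) * α⌋ - ⌊(s : ℝ) * α⌋)
    · rw [hw0def]
      push_cast
      linear_combination hsfloor - hvfloor
    · linarith
    · linarith
  have hw0ne : w0 ≠ 0 := by
    intro h0
    rw [h0] at hx1val
    norm_num at hx1val
    linarith
  have hw0le : w0 ≤ Q9 - 2 := by omega
  obtain ⟨nb, hnb⟩ := exists_nat_ge (1 / b8)
  have hnb1 : 1 ≤ (nb : ℝ) * b8 := by
    rw [div_le_iff₀ p8] at hnb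
    linarith
  have hstart : ∃ q : ℤ, (1 ≤ q ∧ q ≤ Q9 - 2) ∧ L ≤ Int.fract ((q : ℝ) * α) ∧
      Int.fract ((q : ℝ) * α) ≤ R := by
    rcases le_or_gt (-1) w0 with hge | hlt2
    · -- w0 ∈ {-1} ∪ [1, Q9-2]
      have hstate : w0 = -1 ∨ (1 ≤ w0 ∧ w0 ≤ Q9 - 2) := by omega
      exact climb nb w0 hstate (by rw [hx1val]; linarith)
        (by rw [hx1val]; have : L ≤ 1 := le_of_lt hL1; linarith)
    · -- w0 ≤ -2 : add Q9
      set w0' : ℤ := w0 + Q9 with hw0'def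
      have hval' : Int.fract ((w0' : ℝ) * α) = v - dss + eps α (k + 9) := by
        apply fract_eq_of _ _ (⌊(q'' : ℝ) * α⌋ - ⌊(s : ℝ) * α⌋ + pz α (k + 9))
        · rw [hw0'def, hw0def]
          push_cast
          linear_combination hsfloor - hvfloor + hq9α
        · have hanti09 : b9 ≤ b0 := bet_anti hα (by omega)
          linarith
        · linarith
      have hstate : w0' = -1 ∨ (1 ≤ w0' ∧ w0' ≤ Q9 - 2) := by
        right
        constructor
        · omega
        · omega
      refine climb nb w0' hstate ?_ ?_
      · rw [hval']
        linarith
      · rw [hval']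
        have hanti09 : b9 ≤ b0 := bet_anti hα (by omega)
        have : L ≤ 1 := le_of_lt hL1
        linarith
  obtain ⟨q, ⟨hqa, hqb⟩, hqL, hqR⟩ := hstart
  refine ⟨q, hqa, ?_, ?_⟩
  · rw [hcfq9]
    have : ((q : ℤ) : ℝ) ≤ ((Q9 - 2 : ℤ) : ℝ) := by exact_mod_cast hqb
    push_cast at this ⊢
    linarith
  · intro x hx
    rw [Set.mem_Ico] at hx
    constructor <;> rw [Set.mem_Ico] <;> constructor
    · linarith [hx.1]
    · linarith [hx.2]
    · linarith [hx.1]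
    · linarith [hx.2]
end

section
/- (Simple Case bound for the L-surface) Let 0 < α < 1 be irrational and T = T_α the L-surface interval exchange on [0,3). Let y_1, ..., y_m be a T-orbit segment (T(y_i) = y_{i+1}). Suppose there exist an index ℓ_1 and a permutation r(ℓ_1), r*(ℓ_1), r**(ℓ_1) of {0,1,2} such that the orbit {y_i : 1 ≤ i ≤ m} is disjoint from each of the three translated special intervals r(ℓ_1)+J_k(ℓ_1), r*(ℓ_1)+J_k(ℓ_1), r**(ℓ_1)+J_k(ℓ_1). Then m ≤ 2q_{k+1} + 6. -/
/-- The interval exchange transformation T = T_α on [0,3) encoding the geodesic flow of slope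
1/α on the L-surface: each of the six pieces is a translation. -/
noncomputable def TL (α : ℝ) (x : ℝ) : ℝ :=
  if x < 1 - α then x + 2 + α
  else if x < 1 then x + α
  else if x < 2 - α then x + α
  else if x < 2 then x + α
  else if x < 3 - α then x + α - 2
  else x + α - 3

namespace Stmt15Aux

open GenContFract

noncomputable def E (α : ℝ) (n : ℕ) : ℝ :=
  (GenContFract.of α).dens n * α - (GenContFract.of α).nums n

variable {α : ℝ}

lemma not_term (hα : Irrational α) (n : ℕ) : ¬(GenContFract.of α).TerminatedAt n := by
  intro h
  have ht : (GenContFract.of α).Terminates := ⟨n, h⟩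
  rw [GenContFract.terminates_iff_rat] at ht
  obtain ⟨q, hq⟩ := ht
  exact hα ⟨q, hq.symm⟩

lemma stream_some (hα : Irrational α) (n : ℕ) :
    ∃ ifp, IntFractPair.stream α n = some ifp := by
  cases n with
  | zero => exact ⟨_, IntFractPair.stream_zero α⟩
  | succ n =>
    have h := not_term hα n
    rw [of_terminatedAt_n_iff_succ_nth_intFractPair_stream_eq_none] at h
    exact Option.ne_none_iff_exists'.mp h

lemma fr_pos (hα : Irrational α) {n : ℕ} {ifp : IntFractPair ℝ}
    (h : IntFractPair.stream α n = some ifp) : 0 < ifp.fr ∧ ifp.fr < 1 := by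
  have h1 := IntFractPair.nth_stream_fr_nonneg_lt_one h
  refine ⟨lt_of_le_of_ne h1.1 ?_, h1.2⟩
  intro h0
  obtain ⟨ifp', hifp'⟩ := stream_some hα (n + 1)
  have := IntFractPair.stream_eq_none_of_fr_eq_zero h h0.symm
  rw [this] at hifp'; simp at hifp'

lemma s_some (hα : Irrational α) (n : ℕ) : ∃ gp, (GenContFract.of α).s.get? n = some gp :=
  Option.ne_none_iff_exists'.mp (terminatedAt_iff_s_none.not.mp (not_term hα n))

lemma contsAux_int (hα : Irrational α) : ∀ n : ℕ,
    (∃ a : ℤ, ((GenContFract.of α).contsAux n).a = (a : ℝ)) ∧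
      ∃ b : ℤ, ((GenContFract.of α).contsAux n).b = (b : ℝ) := by
  have key : ∀ n : ℕ,
      ((∃ a : ℤ, ((GenContFract.of α).contsAux n).a = (a : ℝ)) ∧
        ∃ b : ℤ, ((GenContFract.of α).contsAux n).b = (b : ℝ)) ∧
      ((∃ a : ℤ, ((GenContFract.of α).contsAux (n+1)).a = (a : ℝ)) ∧
        ∃ b : ℤ, ((GenContFract.of α).contsAux (n+1)).b = (b : ℝ)) := by
    intro n
    induction n with
    | zero =>
      constructor
      · rw [zeroth_contAux_eq_one_zero]
        exact ⟨⟨1, by norm_num⟩, ⟨0, by norm_num⟩⟩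
      · rw [first_contAux_eq_h_one, of_h_eq_floor]
        exact ⟨⟨⌊α⌋, rfl⟩, ⟨1, by norm_num⟩⟩
    | succ n ih =>
      refine ⟨ih.2, ?_⟩
      obtain ⟨gp, hgp⟩ := s_some hα n
      have hrec := contsAux_recurrence hgp rfl rfl
      have ha1 : gp.a = 1 := of_partNum_eq_one (partNum_eq_s_a hgp)
      obtain ⟨z, hz⟩ : ∃ z : ℤ, gp.b = (z : ℝ) :=
        exists_int_eq_of_partDen (partDen_eq_s_b hgp)
      obtain ⟨⟨a0, ha0⟩, ⟨b0, hb0⟩⟩ := ih.1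
      obtain ⟨⟨a1, ha1'⟩, ⟨b1, hb1'⟩⟩ := ih.2
      rw [hrec]
      refine ⟨⟨z * a1 + a0, ?_⟩, ⟨z * b1 + b0, ?_⟩⟩ <;>
        simp [ha1, hz, ha0, hb0, ha1', hb1']
  exact fun n => (key n).1

lemma one_le_dens (n : ℕ) : (1 : ℝ) ≤ (GenContFract.of α).dens n := by
  induction n with
  | zero => rw [zeroth_den_eq_one]
  | succ n ih => exact ih.trans (of_den_mono)

lemma dens_int (hα : Irrational α) (n : ℕ) :
    ∃ b : ℤ, 1 ≤ b ∧ (GenContFract.of α).dens n = (b : ℝ) := by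
  obtain ⟨b, hb⟩ := (contsAux_int hα (n+1)).2
  have hb' : (GenContFract.of α).dens n = (b : ℝ) := by
    rw [den_eq_conts_b, nth_cont_eq_succ_nth_contAux]; exact hb
  refine ⟨b, ?_, hb'⟩
  have := one_le_dens (α := α) n
  rw [hb'] at this; exact_mod_cast this

lemma nums_int (hα : Irrational α) (n : ℕ) :
    ∃ a : ℤ, (GenContFract.of α).nums n = (a : ℝ) := by
  obtain ⟨a, ha⟩ := (contsAux_int hα (n+1)).1
  exact ⟨a, by rw [num_eq_conts_a, nth_cont_eq_succ_nth_contAux]; exact ha⟩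

lemma E_zero (hα : Irrational α) : E α 0 = Int.fract α := by
  rw [E, zeroth_den_eq_one, zeroth_num_eq_h, of_h_eq_floor, one_mul, Int.fract]

lemma E_succ (hα : Irrational α) (n : ℕ) :
    ∃ f : ℝ, 0 < f ∧ f < 1 ∧ E α (n + 1) = -(f * E α n) := by
  obtain ⟨ifp, hifp⟩ := stream_some hα (n + 1)
  obtain ⟨hf0, hf1⟩ := fr_pos hα hifp
  have hcorr := compExactValue_correctness_of_stream_eq_some hifp
  rw [GenContFract.compExactValue] at hcorr
  have hfrne : ¬ifp.fr = 0 := ne_of_gt hf0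
  rw [if_neg hfrne] at hcorr
  set pc := (GenContFract.of α).contsAux (n + 1) with hpc
  set cc := (GenContFract.of α).contsAux (n + 2) with hcc
  have hB : cc.b = (GenContFract.of α).dens (n + 1) := by
    rw [den_eq_conts_b, nth_cont_eq_succ_nth_contAux]
  have hpB : pc.b = (GenContFract.of α).dens n := by
    rw [den_eq_conts_b, nth_cont_eq_succ_nth_contAux]
  have hA : cc.a = (GenContFract.of α).nums (n + 1) := by
    rw [num_eq_conts_a, nth_cont_eq_succ_nth_contAux]
  have hpA : pc.a = (GenContFract.of α).nums n := by
    rw [num_eq_conts_a, nth_cont_eq_succ_nth_contAux]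
  have hden_pos : 0 < ifp.fr⁻¹ * cc.b + pc.b := by
    have h1 : (1:ℝ) ≤ cc.b := by rw [hB]; exact one_le_dens (n+1)
    have h2 : (1:ℝ) ≤ pc.b := by rw [hpB]; exact one_le_dens n
    have : 0 < ifp.fr⁻¹ := inv_pos.mpr hf0
    nlinarith
  rw [GenContFract.nextConts, GenContFract.nextNum, GenContFract.nextDen] at hcorr
  simp only at hcorr
  have hmul : α * (ifp.fr⁻¹ * cc.b + pc.b) = ifp.fr⁻¹ * cc.a + pc.a := by
    rw [hcorr, one_mul, one_mul, div_mul_cancel₀ _ (ne_of_gt hden_pos)]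
  refine ⟨ifp.fr, hf0, hf1, ?_⟩
  have hfr_ne : ifp.fr ≠ 0 := ne_of_gt hf0
  have := congrArg (fun t => t * ifp.fr) hmul
  rw [E, E, ← hA, ← hB, ← hpA, ← hpB]
  field_simp at this
  nlinarith [this]

lemma E_ne (hα : Irrational α) (n : ℕ) : E α n ≠ 0 := by
  induction n with
  | zero =>
    rw [E_zero hα]
    intro h
    have hfl := Int.floor_add_fract α
    rw [h] at hfl
    exact hα.ne_int ⌊α⌋ (by linarith)
  | succ n ih =>
    obtain ⟨f, hf0, _, hE⟩ := E_succ hα n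
    rw [hE]
    simp only [neg_ne_zero]
    exact mul_ne_zero (ne_of_gt hf0) ih

lemma E_mul_neg (hα : Irrational α) (n : ℕ) : E α n * E α (n + 1) < 0 := by
  obtain ⟨f, hf0, _, hE⟩ := E_succ hα n
  rw [hE]
  have h2 : 0 < E α n * E α n := mul_self_pos.mpr (E_ne hα n)
  nlinarith

lemma E_abs_lt (hα : Irrational α) (n : ℕ) : |E α (n + 1)| < |E α n| := by
  obtain ⟨f, hf0, hf1, hE⟩ := E_succ hα n
  rw [hE, abs_neg, abs_mul, abs_of_pos hf0]
  have h2 : 0 < |E α n| := abs_pos.mpr (E_ne hα n)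
  nlinarith

lemma abs_le_abs_add {a b : ℝ} (h : 0 ≤ a * b) : |a| ≤ |a + b| := by
  rw [← Real.sqrt_sq_eq_abs, ← Real.sqrt_sq_eq_abs]
  apply Real.sqrt_le_sqrt; nlinarith

lemma best_approx (hα : Irrational α) (k : ℕ) (pk qk pk1 qk1 : ℤ)
    (hpk : ((pk : ℝ)) = (GenContFract.of α).nums k)
    (hqk : ((qk : ℝ)) = (GenContFract.of α).dens k)
    (hpk1 : ((pk1 : ℝ)) = (GenContFract.of α).nums (k + 1))
    (hqk1 : ((qk1 : ℝ)) = (GenContFract.of α).dens (k + 1))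
    (hqkpos : 1 ≤ qk) (hqk1pos : 1 ≤ qk1)
    (d c : ℤ) (hd0 : d ≠ 0) (hd : |d| < qk1) :
    |E α k| ≤ |(d : ℝ) * α - (c : ℝ)| := by
  have det_real : (GenContFract.of α).nums k * (GenContFract.of α).dens (k+1) -
      (GenContFract.of α).dens k * (GenContFract.of α).nums (k+1) = (-1 : ℝ) ^ (k+1) := by
    have h := SimpContFract.determinant (s := SimpContFract.of α) (not_term hα k)
    exact h
  have det_int : pk * qk1 - qk * pk1 = (-1 : ℤ) ^ (k + 1) := by
    have : ((pk * qk1 - qk * pk1 : ℤ) : ℝ) = ((((-1 : ℤ) ^ (k+1) : ℤ)) : ℝ) := by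
      push_cast
      rw [hpk, hqk, hpk1, hqk1]
      push_cast at det_real ⊢
      linarith [det_real]
    exact_mod_cast this
  set e : ℤ := (-1) ^ (k + 1) with he_def
  have he2 : e * e = 1 := by
    rw [he_def, ← pow_add]
    exact Even.neg_one_pow ⟨k + 1, rfl⟩
  set x : ℤ := e * (c * qk1 - d * pk1) with hx_def
  set y : ℤ := e * (d * pk - c * qk) with hy_def
  have hxy1 : x * qk + y * qk1 = d := by
    rw [hx_def, hy_def]
    linear_combination (e * d) * det_int + d * he2
  have hxy2 : x * pk + y * pk1 = c := by
    rw [hx_def, hy_def]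
    linear_combination (e * c) * det_int + c * he2
  have hEk : E α k = (qk : ℝ) * α - (pk : ℝ) := by rw [E, hpk, hqk]
  have hEk1 : E α (k+1) = (qk1 : ℝ) * α - (pk1 : ℝ) := by rw [E, hpk1, hqk1]
  have hkey : (d : ℝ) * α - (c : ℝ) = (x : ℝ) * E α k + (y : ℝ) * E α (k + 1) := by
    have h1 : ((d : ℝ)) = (x : ℝ) * qk + y * qk1 := by exact_mod_cast hxy1.symm
    have h2 : ((c : ℝ)) = (x : ℝ) * pk + y * pk1 := by exact_mod_cast hxy2.symm
    rw [h1, h2, hEk, hEk1]; ring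
  rcases eq_or_ne y 0 with hy0 | hy0
  · have hx0 : x ≠ 0 := by
      intro hx0; rw [hx0, hy0] at hxy1; simp at hxy1; exact hd0 hxy1.symm
    have : (1 : ℝ) ≤ |(x : ℝ)| := by exact_mod_cast Int.one_le_abs hx0
    rw [hkey, hy0]
    push_cast
    rw [zero_mul, add_zero, abs_mul]
    nlinarith [abs_nonneg (E α k)]
  rcases eq_or_ne x 0 with hx0 | hx0
  · exfalso
    rw [hx0, zero_mul, zero_add] at hxy1
    have h1 : (1:ℤ) ≤ |y| := Int.one_le_abs hy0
    have hge : qk1 ≤ |d| := by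
      rw [← hxy1, abs_mul, abs_of_pos (by omega : (0:ℤ) < qk1)]
      nlinarith
    exact absurd hd (not_lt.mpr hge)
  rcases lt_trichotomy (x * y) 0 with hxy | hxy | hxy
  · have hsame : 0 ≤ ((x : ℝ) * E α k) * ((y : ℝ) * E α (k + 1)) := by
      have h1 : ((x * y : ℤ) : ℝ) < 0 := by exact_mod_cast hxy
      have h2 := E_mul_neg hα k
      push_cast at h1
      nlinarith
    rw [hkey]
    have h3 : |(x : ℝ) * E α k| ≤ |(x : ℝ) * E α k + (y : ℝ) * E α (k + 1)| :=
      abs_le_abs_add hsame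
    have h4 : (1 : ℝ) ≤ |(x : ℝ)| := by exact_mod_cast Int.one_le_abs hx0
    rw [abs_mul] at h3
    nlinarith [abs_nonneg (E α k)]
  · exact absurd hxy (mul_ne_zero hx0 hy0)
  · exfalso
    have h1 : (1:ℤ) ≤ |x| := Int.one_le_abs hx0
    have h2 : (1:ℤ) ≤ |y| := Int.one_le_abs hy0
    have hge : qk1 ≤ |d| := by
      rcases lt_or_gt_of_ne hx0 with hx | hx
      · have hy : y < 0 := by nlinarith
        have hdneg : d ≤ -qk1 := by nlinarith [hxy1]
        rw [abs_of_neg (by omega : d < 0)]; omega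
      · have hy : 0 < y := by nlinarith
        have hdpos : qk1 ≤ d := by nlinarith [hxy1]
        rw [abs_of_pos (by omega : 0 < d)]; omega
    exact absurd hd (not_lt.mpr hge)

lemma fract_shift (x s : ℝ) : Int.fract (Int.fract x + s) = Int.fract (x + s) := by
  have h : Int.fract x + s = (x + s) + ((-⌊x⌋ : ℤ) : ℝ) := by
    rw [Int.fract]; push_cast; ring
  rw [h, Int.fract_add_intCast]

lemma fract_congr_add {x x' : ℝ} (h : Int.fract x = Int.fract x') (c : ℝ) :
    Int.fract (x + c) = Int.fract (x' + c) := by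
  rw [← fract_shift x c, ← fract_shift x' c, h]

lemma hit (N : ℕ) (hN : 0 < N) (u : ℕ → ℝ) (hu : ∀ j, j < N → ∃ x : ℝ, u j = Int.fract x)
    (ε a b : ℝ) (hε : 0 < ε) (ha : 0 ≤ a) (hb : b ≤ 1) (hab : a + ε ≤ b)
    (hstep : ∀ j, j < N → ∃ j', j' < N ∧ ∃ s, 0 < s ∧ s ≤ ε ∧ u j' = Int.fract (u j + s)) :
    ∃ j, j < N ∧ a ≤ u j ∧ u j < b := by
  have hu01 : ∀ j, j < N → 0 ≤ u j ∧ u j < 1 := by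
    intro j hj
    obtain ⟨x, hx⟩ := hu j hj
    exact ⟨hx ▸ Int.fract_nonneg x, hx ▸ Int.fract_lt_one x⟩
  by_contra hcon
  push_neg at hcon
  set F : ℕ → ℝ := fun j => Int.fract (a - u j) with hF
  obtain ⟨j0, hj0mem, hmin⟩ :=
    (Finset.range N).exists_min_image F ⟨0, Finset.mem_range.mpr hN⟩
  have hj0 : j0 < N := Finset.mem_range.mp hj0mem
  have hu0 := hu01 j0 hj0
  have hfl : a - u j0 = F j0 + (⌊a - u j0⌋ : ℝ) := by
    show a - u j0 = Int.fract (a - u j0) + (⌊a - u j0⌋ : ℝ)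
    rw [Int.fract]; ring
  rcases eq_or_ne (F j0) 0 with hF0 | hF0
  · have hz : a - u j0 = ((⌊a - u j0⌋ : ℤ) : ℝ) := by linear_combination hfl + hF0
    have h1' : ⌊a - u j0⌋ < 1 := by
      have : ((⌊a - u j0⌋ : ℤ) : ℝ) < 1 := by rw [← hz]; linarith [hu0.1]
      exact_mod_cast this
    have h2' : -1 < ⌊a - u j0⌋ := by
      have : (-1 : ℝ) < ((⌊a - u j0⌋ : ℤ) : ℝ) := by rw [← hz]; linarith [hu0.2, ha]
      exact_mod_cast this
    have hz0 : ⌊a - u j0⌋ = 0 := by omega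
    have hzz : ((⌊a - u j0⌋ : ℤ) : ℝ) = 0 := by rw [hz0]; norm_num
    have hua : u j0 = a := by linarith [hz, hzz]
    have := hcon j0 hj0 (le_of_eq hua.symm)
    rw [hua] at this; linarith
  have hFpos : 0 < F j0 := lt_of_le_of_ne (Int.fract_nonneg _) (Ne.symm hF0)
  have hF1 : F j0 < 1 := Int.fract_lt_one _
  obtain ⟨j', hj', s, hs0, hsε, hus⟩ := hstep j0 hj0
  rcases lt_or_ge s (F j0) with hlt | hge
  · have hFj' : F j' = F j0 - s := by
      have h1 : a - u j' = (a - u j0 - s) + ((⌊u j0 + s⌋ : ℤ) : ℝ) := by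
        rw [hus, Int.fract]; push_cast; ring
      have h2 : F j' = Int.fract (a - u j0 - s) := by
        show Int.fract (a - u j') = _
        rw [h1, Int.fract_add_intCast]
      have h3 : a - u j0 - s = (F j0 - s) + ((⌊a - u j0⌋ : ℤ) : ℝ) := by
        linear_combination hfl
      rw [h2, h3, Int.fract_add_intCast]
      exact Int.fract_eq_self.mpr ⟨by linarith, by linarith⟩
    have := hmin j' (Finset.mem_range.mpr hj')
    rw [hFj'] at this; linarith
  · have hland : u j' = a + (s - F j0) := by
      have h1 : u j0 + s = (a + (s - F j0)) + ((-⌊a - u j0⌋ : ℤ) : ℝ) := by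
        push_cast
        linear_combination (-1 : ℝ) * hfl
      rw [hus, h1, Int.fract_add_intCast]
      refine Int.fract_eq_self.mpr ⟨by linarith, by linarith⟩
    have h1 : a ≤ u j' := by rw [hland]; linarith
    have h2 : u j' < b := by rw [hland]; linarith
    have := hcon j' hj' h1; linarith

lemma TL_fract (α x : ℝ) : Int.fract (TL α x) = Int.fract (x + α) := by
  unfold TL
  split_ifs
  · have h : x + 2 + α = (x + α) + ((2 : ℤ) : ℝ) := by push_cast; ring
    rw [h, Int.fract_add_intCast]
  · rfl
  · rfl
  · rfl
  · have h : x + α - 2 = (x + α) + ((-2 : ℤ) : ℝ) := by push_cast; ring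
    rw [h, Int.fract_add_intCast]
  · have h : x + α - 3 = (x + α) + ((-3 : ℤ) : ℝ) := by push_cast; ring
    rw [h, Int.fract_add_intCast]

end Stmt15Aux

open Stmt15Aux GenContFract in
/-- Simple Case bound for the L-surface: if a T_α-orbit segment y_1, ..., y_m in [0,3) avoids
all three translated copies r + J_k(ℓ₁), r ∈ {0,1,2}, of a special interval
J_k(ℓ₁) = [{ℓ₁α} − d**, {ℓ₁α} + d*), then m ≤ 2q_{k+1} + 6.  The gaps d* = dst and d** = dss
of the partition A_k(α) are characterized as least elements. -/
theorem stmt15 (α : ℝ) (hα : Irrational α) (h0 : 0 < α) (h1 : α < 1)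
    (k : ℕ) (hk : 1 ≤ k) (dst dss : ℝ)
    (hdss : IsLeast {x : ℝ | ∃ q : ℤ, -1 ≤ q ∧ (q : ℝ) ≤ cfq α (k + 1) - 2 ∧ q ≠ 0 ∧
      Int.fract ((q : ℝ) * α) = x} dss)
    (hdst : IsLeast {x : ℝ | ∃ q : ℤ, -1 ≤ q ∧ (q : ℝ) ≤ cfq α (k + 1) - 2 ∧ q ≠ 0 ∧
      1 - Int.fract ((q : ℝ) * α) = x} dst)
    (m : ℕ) (y : ℕ → ℝ)
    (hy : ∀ i, 1 ≤ i → i ≤ m → y i ∈ Set.Ico (0 : ℝ) 3)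
    (horb : ∀ i, 1 ≤ i → i + 1 ≤ m → TL α (y i) = y (i + 1))
    (ℓ : ℤ) (hℓ1 : 1 ≤ ℓ) (hℓ2 : (ℓ : ℝ) ≤ cfq α (k + 1) - 2)
    (r0 r1 r2 : ℝ) (hperm : ({r0, r1, r2} : Set ℝ) = {0, 1, 2})
    (hfree : ∀ i, 1 ≤ i → i ≤ m → ∀ r ∈ ({r0, r1, r2} : Set ℝ),
      y i ∉ Set.Ico (r + Int.fract ((ℓ : ℝ) * α) - dss)
        (r + Int.fract ((ℓ : ℝ) * α) + dst)) :
    (m : ℝ) ≤ 2 * cfq α (k + 1) + 6 := by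
  classical
  obtain ⟨qkZ, hqkZ1, hqkZ⟩ := dens_int hα k
  obtain ⟨qk1Z, hqk1Z1, hqk1Z⟩ := dens_int hα (k+1)
  obtain ⟨pkZ, hpkZ⟩ := nums_int hα k
  obtain ⟨pk1Z, hpk1Z⟩ := nums_int hα (k+1)
  have hcfq : cfq α (k+1) = ((qk1Z : ℝ)) := by rw [cfq]; exact hqk1Z
  have hq3 : (3:ℝ) ≤ (qk1Z:ℝ) := by
    have h1ℓ : (1:ℝ) ≤ (ℓ:ℝ) := by exact_mod_cast hℓ1
    rw [hcfq] at hℓ2; linarith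
  have hq3' : (3:ℤ) ≤ qk1Z := by exact_mod_cast hq3
  set β := Int.fract ((ℓ : ℝ) * α) with hβdef
  set η := |E α k| with hηdef
  have hη : 0 < η := abs_pos.mpr (E_ne hα k)
  have hη' : |E α (k+1)| < η := E_abs_lt hα k
  have hEprod := E_mul_neg hα k
  have hEk : E α k = (qkZ:ℝ) * α - (pkZ:ℝ) := by rw [E, hqkZ, hpkZ]
  have hEk1 : E α (k+1) = (qk1Z:ℝ) * α - (pk1Z:ℝ) := by rw [E, hqk1Z, hpk1Z]
  have hba : ∀ q : ℤ, -1 ≤ q → (q:ℝ) ≤ cfq α (k+1) - 2 → q ≠ 0 →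
      ∀ c : ℤ, η ≤ |(q:ℝ) * α - (c:ℝ)| := by
    intro q h1 h2 h0q c
    have habs : |q| < qk1Z := by
      rcases (by omega : q = -1 ∨ 1 ≤ q) with h | h
      · rw [h]; norm_num; omega
      · rw [hcfq] at h2
        have hq' : (q:ℝ) ≤ ((qk1Z - 2 : ℤ) : ℝ) := by push_cast; linarith
        have hq'' : q ≤ qk1Z - 2 := by exact_mod_cast hq'
        rw [abs_of_pos (by omega : (0:ℤ) < q)]; omega
    exact best_approx hα k pkZ qkZ pk1Z qk1Z hpkZ.symm hqkZ.symm hpk1Z.symm hqk1Z.symm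
      hqkZ1 hqk1Z1 q c h0q habs
  have hdss_ge : η ≤ dss := by
    obtain ⟨q1, h1, h2, h3, h4⟩ := hdss.1
    have h5 : Int.fract ((q1:ℝ)*α) = |(q1:ℝ)*α - ((⌊(q1:ℝ)*α⌋ : ℤ):ℝ)| := by
      have hnn := Int.fract_nonneg ((q1:ℝ)*α)
      rw [Int.fract] at hnn ⊢
      exact (abs_of_nonneg hnn).symm
    rw [← h4, h5]; exact hba q1 h1 h2 h3 _
  have hdst_ge : η ≤ dst := by
    obtain ⟨q2, h1, h2, h3, h4⟩ := hdst.1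
    have h5 : 1 - Int.fract ((q2:ℝ)*α) = |(q2:ℝ)*α - ((⌊(q2:ℝ)*α⌋ + 1 : ℤ):ℝ)| := by
      have hle := le_of_lt (Int.fract_lt_one ((q2:ℝ)*α))
      rw [Int.fract] at hle ⊢
      push_cast
      rw [abs_of_nonpos (by linarith)]
      ring
    rw [← h4, h5]; exact hba q2 h1 h2 h3 _
  have hℓne : (ℓ : ℤ) ≠ 0 := by omega
  have hdss_le : dss ≤ β := hdss.2 ⟨ℓ, by omega, hℓ2, hℓne, rfl⟩
  have hdst_le : dst ≤ 1 - β := by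
    have := hdst.2 ⟨ℓ, by omega, hℓ2, hℓne, rfl⟩; linarith
  set a := β - dss with hadef
  set b := β + dst with hbdef
  have hβnn : 0 ≤ β := Int.fract_nonneg _
  have hβlt : β < 1 := Int.fract_lt_one _
  have ha : 0 ≤ a := by rw [hadef]; linarith
  have hb : b ≤ 1 := by rw [hbdef]; linarith
  have hab2 : a + 2*η ≤ b := by rw [hadef, hbdef]; linarith
  set Qk : ℕ := qkZ.toNat with hQkdef
  set Qk1 : ℕ := qk1Z.toNat with hQk1def
  have hQkR : ((Qk : ℕ) : ℝ) = (qkZ : ℝ) := by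
    rw [hQkdef]; exact_mod_cast Int.toNat_of_nonneg (by omega)
  have hQk1R : ((Qk1 : ℕ) : ℝ) = (qk1Z : ℝ) := by
    rw [hQk1def]; exact_mod_cast Int.toNat_of_nonneg (by omega)
  set N := Qk + Qk1 with hNdef
  have hQk1pos : 0 < Qk1 := by rw [hQk1def]; omega
  have hNpos : 0 < N := by omega
  rcases lt_or_ge m N with hm | hm
  · -- small orbit: direct count
    have hmR : (m:ℝ) < (N:ℝ) := by exact_mod_cast hm
    have hNR : (N:ℝ) = (qkZ:ℝ) + (qk1Z:ℝ) := by
      rw [hNdef]; push_cast [hQkR, hQk1R]; ring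
    have hmono : (qkZ:ℝ) ≤ (qk1Z:ℝ) := by
      rw [← hqkZ, ← hqk1Z]; exact of_den_mono
    rw [hcfq]; linarith
  exfalso
  -- orbit points equal rotation of the first point, mod 1
  have horb' : ∀ j : ℕ, j + 1 ≤ m → Int.fract (y (j+1)) = Int.fract (y 1 + (j:ℝ) * α) := by
    intro j
    induction j with
    | zero => intro _; norm_num
    | succ j ih =>
      intro hj
      have h1 : j + 1 ≤ m := by omega
      have hT := horb (j+1) (by omega) (by omega)
      have hstp : Int.fract (y (j+1+1)) = Int.fract (y (j+1) + α) := by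
        rw [← hT]; exact TL_fract α (y (j+1))
      rw [hstp, fract_congr_add (ih h1) α]
      congr 1; push_cast; ring
  -- the orbit avoids [a, b) mod 1
  have havoid : ∀ j : ℕ, j < N →
      ¬(a ≤ Int.fract (y 1 + (j:ℝ)*α) ∧ Int.fract (y 1 + (j:ℝ)*α) < b) := by
    rintro j hj ⟨hx1, hx2⟩
    have hjm : j + 1 ≤ m := by omega
    have hfr := horb' j hjm
    have hyi := hy (j+1) (by omega) hjm
    rw [Set.mem_Ico] at hyi
    set z : ℤ := ⌊y (j+1)⌋ with hzdef
    have hz0 : 0 ≤ z := Int.floor_nonneg.mpr hyi.1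
    have hz2 : z < 3 := by
      rw [hzdef]; exact Int.floor_lt.mpr (by exact_mod_cast hyi.2)
    have hzr : ((z:ℝ)) ∈ ({r0, r1, r2} : Set ℝ) := by
      rw [hperm]
      interval_cases z <;> norm_num
    have hfloor := Int.floor_add_fract (y (j+1))
    refine hfree (j+1) (by omega) hjm (z:ℝ) hzr (Set.mem_Ico.mpr ⟨?_, ?_⟩)
    · rw [hadef] at hx1
      rw [← hzdef] at hfloor
      rw [hfr] at hfloor
      linarith
    · rw [hbdef] at hx2
      rw [← hzdef] at hfloor
      rw [hfr] at hfloor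
      linarith
  rcases lt_or_gt_of_ne (E_ne hα k) with hEneg | hEpos
  · -- E α k < 0 : work with the reflected orbit
    have hεeq : η = -(E α k) := abs_of_neg hEneg
    have hEk1pos : 0 < E α (k+1) := by nlinarith
    have hEk1le : E α (k+1) ≤ η := by
      have : |E α (k+1)| = E α (k+1) := abs_of_pos hEk1pos
      linarith
    set u : ℕ → ℝ := fun j => Int.fract (-(y 1 + (j:ℝ) * α)) with hudef
    have hstep : ∀ j, j < N → ∃ j', j' < N ∧ ∃ s, 0 < s ∧ s ≤ η ∧
        u j' = Int.fract (u j + s) := by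
      intro j hj
      rcases lt_or_ge j Qk1 with hc | hc
      · refine ⟨j + Qk, by omega, -(E α k), by linarith, le_of_eq hεeq.symm, ?_⟩
        show Int.fract (-(y 1 + ((j + Qk : ℕ):ℝ) * α)) =
          Int.fract (Int.fract (-(y 1 + (j:ℝ) * α)) + -(E α k))
        rw [fract_shift]
        have h2 : -(y 1 + (j:ℝ)*α) + -(E α k) =
            (-(y 1 + ((j + Qk : ℕ):ℝ) * α)) + ((pkZ : ℤ):ℝ) := by
          rw [hEk]; push_cast [hQkR]; ring
        rw [h2, Int.fract_add_intCast]
      · refine ⟨j - Qk1, by omega, E α (k+1), hEk1pos, hEk1le, ?_⟩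
        have hjj : ((j - Qk1 : ℕ) : ℝ) = (j:ℝ) - ((Qk1:ℕ):ℝ) := by
          push_cast [Nat.cast_sub hc]; ring
        show Int.fract (-(y 1 + ((j - Qk1 : ℕ):ℝ) * α)) =
          Int.fract (Int.fract (-(y 1 + (j:ℝ) * α)) + E α (k+1))
        rw [fract_shift]
        have h2 : -(y 1 + (j:ℝ)*α) + E α (k+1) =
            (-(y 1 + ((j - Qk1 : ℕ):ℝ) * α)) + ((-pk1Z : ℤ):ℝ) := by
          rw [hjj, hEk1]; push_cast [hQk1R]; ring
        rw [h2, Int.fract_add_intCast]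
    obtain ⟨j, hjN, hja, hjb⟩ := hit N hNpos u (fun j _ => ⟨_, rfl⟩) η
      (1 - b + η/2) (1 - a) hη (by linarith) (by linarith) (by linarith) hstep
    have hune : 0 < u j := by linarith
    have hfX : Int.fract (y 1 + (j:ℝ)*α) ≠ 0 := by
      intro h
      have : u j = 0 := by
        show Int.fract (-(y 1 + (j:ℝ) * α)) = 0
        exact Int.fract_neg_eq_zero.mpr h
      linarith
    have hrel : u j = 1 - Int.fract (y 1 + (j:ℝ)*α) := by
      show Int.fract (-(y 1 + (j:ℝ) * α)) = _
      exact Int.fract_neg hfX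
    exact havoid j hjN ⟨by linarith, by linarith⟩
  · -- E α k > 0
    have hεeq : η = E α k := abs_of_pos hEpos
    have hEk1neg : E α (k+1) < 0 := by nlinarith
    have hEk1le : -(E α (k+1)) ≤ η := by
      have : |E α (k+1)| = -(E α (k+1)) := abs_of_neg hEk1neg
      linarith
    set u : ℕ → ℝ := fun j => Int.fract (y 1 + (j:ℝ) * α) with hudef
    have hstep : ∀ j, j < N → ∃ j', j' < N ∧ ∃ s, 0 < s ∧ s ≤ η ∧
        u j' = Int.fract (u j + s) := by
      intro j hj
      rcases lt_or_ge j Qk1 with hc | hc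
      · refine ⟨j + Qk, by omega, E α k, hEpos, le_of_eq hεeq.symm, ?_⟩
        show Int.fract (y 1 + ((j + Qk : ℕ):ℝ) * α) =
          Int.fract (Int.fract (y 1 + (j:ℝ) * α) + E α k)
        rw [fract_shift]
        have h2 : (y 1 + (j:ℝ)*α) + E α k =
            (y 1 + ((j + Qk : ℕ):ℝ) * α) + ((-pkZ : ℤ):ℝ) := by
          rw [hEk]; push_cast [hQkR]; ring
        rw [h2, Int.fract_add_intCast]
      · refine ⟨j - Qk1, by omega, -(E α (k+1)), by linarith, hEk1le, ?_⟩
        have hjj : ((j - Qk1 : ℕ) : ℝ) = (j:ℝ) - ((Qk1:ℕ):ℝ) := by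
          push_cast [Nat.cast_sub hc]; ring
        show Int.fract (y 1 + ((j - Qk1 : ℕ):ℝ) * α) =
          Int.fract (Int.fract (y 1 + (j:ℝ) * α) + -(E α (k+1)))
        rw [fract_shift]
        have h2 : (y 1 + (j:ℝ)*α) + -(E α (k+1)) =
            (y 1 + ((j - Qk1 : ℕ):ℝ) * α) + ((pk1Z : ℤ):ℝ) := by
          rw [hjj, hEk1]; push_cast [hQk1R]; ring
        rw [h2, Int.fract_add_intCast]
    obtain ⟨j, hjN, hja, hjb⟩ := hit N hNpos u (fun j _ => ⟨_, rfl⟩) η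
      a b hη ha hb (by linarith) hstep
    exact havoid j hjN ⟨hja, hjb⟩
end

section
/- (Case 2B bound for the L-surface) Let 0 < α < 1 be irrational, T = T_α the L-surface interval exchange on [0,3), and y_1, ..., y_m a T-orbit segment. Under the hypotheses of Case 2B (there exist special intervals J_{k+16}(ℓ_3) ⊂ J_{k+8}(q^{++}) and three distinct residues r^(0), r^(1), r^(2) ∈ {0,1,2} such that the orbit points y_i with q_{k+1}+q_{k+9} ≤ i ≤ m−q_{k+1}−q_{k+9} avoid r^(j)+J_{k+16}(ℓ_3) for each j), we have m ≤ 2q_{k+1} + 2q_{k+9} + 2q_{k+17} + 6. -/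
section S16AUX
open GenContFract


theorem s16_fract_shl (x y : ℝ) : Int.fract (x + y) = Int.fract (Int.fract x + y) := by
  rw [Int.fract_eq_fract]; exact ⟨⌊x⌋, by unfold Int.fract; ring⟩

theorem s16_fract_shr (x y : ℝ) : Int.fract (x - y) = Int.fract (x - Int.fract y) := by
  rw [Int.fract_eq_fract]; exact ⟨-⌊y⌋, by unfold Int.fract; push_cast; ring⟩

theorem s16_fract_sub2 (x y : ℝ) :
    Int.fract (x - y) = Int.fract (Int.fract x - Int.fract y) := by
  rw [s16_fract_shr, show x - Int.fract y = x + -Int.fract y by ring, s16_fract_shl]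
  ring_nf

theorem s16_fract_add2 (x y : ℝ) :
    Int.fract (x + y) = Int.fract (Int.fract x + Int.fract y) := by
  rw [s16_fract_shl, add_comm, s16_fract_shl, add_comm]

theorem s16_cover (α c η ζ : ℝ) (M s t : ℕ)
    (hs1 : 1 ≤ s) (hsM : s ≤ M) (ht1 : 1 ≤ t) (htM : t ≤ M)
    (hη : 0 < η) (hζ : 0 < ζ) (hηc : η ≤ c) (hcζ : c + ζ ≤ 1)
    (hfs : Int.fract ((s : ℝ) * α) = η) (hft : Int.fract ((t : ℝ) * α) = 1 - ζ)
    (w : ℝ) :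
    ∃ q : ℕ, q ≤ 2 * M ∧ Int.fract (w + (q : ℝ) * α) ∈ Set.Ico (c - η) (c + ζ) := by
  by_contra hcon
  push_neg at hcon
  set g : ℕ → ℝ := fun q => Int.fract (w + (q : ℝ) * α - c + η) with hg
  have hgfr : ∀ q : ℕ, g q = Int.fract (w + (q : ℝ) * α - c + η) := fun _ => rfl
  -- avoidance implies g is at least η + ζ
  have key : ∀ q : ℕ, q ≤ 2 * M → η + ζ ≤ g q := by
    intro q hq
    by_contra hlt
    push_neg at hlt
    set z : ℝ := Int.fract (w + (q : ℝ) * α) with hz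
    have hz0 : 0 ≤ z := Int.fract_nonneg _
    have hz1 : z < 1 := Int.fract_lt_one _
    have hgz : g q = Int.fract (z - c + η) := by
      rw [hgfr, show w + (q : ℝ) * α - c + η = (w + (q : ℝ) * α) + (-c + η) by ring,
        s16_fract_shl, ← hz, show z + (-c + η) = z - c + η by ring]
    rcases le_or_gt 0 (z - c + η) with hpos | hneg
    · have hfe : Int.fract (z - c + η) = z - c + η :=
        Int.fract_eq_self.mpr ⟨hpos, by linarith⟩
      rw [hgz, hfe] at hlt
      exact hcon q hq ⟨by linarith, by linarith⟩
    · have hfe : Int.fract (z - c + η) = z - c + η + 1 := by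
        rw [show z - c + η = (z - c + η + 1) - ((1 : ℤ) : ℝ) by push_cast; ring,
          Int.fract_sub_intCast, Int.fract_eq_self.mpr ⟨by linarith, by linarith⟩]
        push_cast
        ring
      rw [hgz, hfe] at hlt
      linarith
  have glt1 : ∀ q : ℕ, g q < 1 := fun q => by rw [hgfr]; exact Int.fract_lt_one _
  -- step relations
  have subs : ∀ u : ℕ, s ≤ u → g (u - s) = Int.fract (g u - η) := by
    intro u hsu
    rw [hgfr, hgfr]
    rw [show w + ((u - s : ℕ) : ℝ) * α - c + η
        = (w + (u : ℝ) * α - c + η) - (s : ℝ) * α by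
      push_cast [Nat.cast_sub hsu]; ring]
    rw [s16_fract_sub2, hfs]
  have addt : ∀ u : ℕ, g (u + t) = Int.fract (g u - ζ) := by
    intro u
    rw [hgfr, hgfr]
    rw [show w + ((u + t : ℕ) : ℝ) * α - c + η
        = (w + (u : ℝ) * α - c + η) + (t : ℝ) * α by push_cast; ring]
    rw [s16_fract_add2, hft]
    rw [show Int.fract (w + (u : ℝ) * α - c + η) + (1 - ζ)
        = (Int.fract (w + (u : ℝ) * α - c + η) - ζ) + ((1 : ℤ) : ℝ) by push_cast; ring,
      Int.fract_add_intCast]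
  -- minimizer of g on [0, M]
  obtain ⟨b, hbmem, hbmin⟩ :=
    Finset.exists_min_image (Finset.range (M + 1)) g ⟨0, by simp⟩
  have hbM : b ≤ M := by simpa [Nat.lt_succ_iff] using hbmem
  have hgb : η + ζ ≤ g b := key b (by omega)
  have hgb1 : g b < 1 := glt1 b
  -- b < s
  have hbs : b < s := by
    by_contra hsb
    push_neg at hsb
    have h1 : g (b - s) = g b - η := by
      rw [subs b hsb, Int.fract_eq_self.mpr ⟨by linarith, by linarith⟩]
    have h2 : g b ≤ g (b - s) := hbmin _ (Finset.mem_range.mpr (by omega))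
    linarith
  -- move to b + t
  have hu2M : b + t ≤ 2 * M := by omega
  have hgu_eq : g (b + t) = g b - ζ := by
    rw [addt b, Int.fract_eq_self.mpr ⟨by linarith, by linarith⟩]
  have hgu : η + ζ ≤ g (b + t) := key _ hu2M
  have hgu1 : g (b + t) < 1 := glt1 _
  have huM : M < b + t := by
    by_contra h
    push_neg at h
    have := hbmin (b + t) (Finset.mem_range.mpr (by omega))
    linarith
  -- move to b + t - s
  have hsu : s ≤ b + t := by omega
  have hv : g (b + t - s) = g (b + t) - η := by
    rw [subs _ hsu, Int.fract_eq_self.mpr ⟨by linarith, by linarith⟩]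
  have hvM : b + t - s ≤ M := by omega
  have := hbmin (b + t - s) (Finset.mem_range.mpr (by omega))
  linarith


theorem s16_not_term {α : ℝ} (hα : Irrational α) (n : ℕ) :
    ¬ (GenContFract.of α).TerminatedAt n := by
  intro h
  obtain ⟨q, hq⟩ := (terminates_iff_rat α).mp ⟨n, h⟩
  exact hα ⟨q, hq.symm⟩

theorem s16_exists_s {α : ℝ} (hα : Irrational α) (n : ℕ) :
    ∃ b : ℤ, 1 ≤ b ∧ (GenContFract.of α).s.get? n = some ⟨1, (b : ℝ)⟩ := by
  cases h : (GenContFract.of α).s.get? n with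
  | none => exact absurd h (s16_not_term hα n)
  | some gp =>
    obtain ⟨ha, z, hb⟩ := of_partNum_eq_one_and_exists_int_partDen_eq h
    have h1b : (1 : ℝ) ≤ gp.b := of_one_le_get?_partDen (partDen_eq_s_b h)
    refine ⟨z, by rw [hb] at h1b; exact_mod_cast h1b, ?_⟩
    cases gp
    simp_all

theorem s16_dens_rec {α : ℝ} (hα : Irrational α) (n : ℕ) :
    ∃ b : ℝ, 1 ≤ b ∧ (GenContFract.of α).dens (n + 2) =
      b * (GenContFract.of α).dens (n + 1) + (GenContFract.of α).dens n := by
  obtain ⟨z, h1, hs⟩ := s16_exists_s hα (n + 1)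
  refine ⟨(z : ℝ), by exact_mod_cast h1, ?_⟩
  rw [dens_recurrence hs rfl rfl]
  simp

theorem s16_dens_le_succ {α : ℝ} (hα : Irrational α) (n : ℕ) :
    (GenContFract.of α).dens n ≤ (GenContFract.of α).dens (n + 1) := by
  cases n with
  | zero =>
    obtain ⟨z, h1, hs⟩ := s16_exists_s hα 0
    rw [zeroth_den_eq_one, first_den_eq hs]
    show (1:ℝ) ≤ (z:ℝ)
    exact_mod_cast h1
  | succ n =>
    obtain ⟨b, h1, hr⟩ := s16_dens_rec hα n
    have h2 := zero_le_of_den (v := α) (n := n)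
    have h3 := zero_le_of_den (v := α) (n := n + 1)
    nlinarith

theorem s16_dens_mono {α : ℝ} (hα : Irrational α) :
    Monotone ((GenContFract.of α).dens) :=
  monotone_nat_of_le_succ (s16_dens_le_succ hα)

theorem s16_one_le_dens {α : ℝ} (hα : Irrational α) (n : ℕ) :
    1 ≤ (GenContFract.of α).dens n := by
  have := s16_dens_mono hα (Nat.zero_le n)
  rwa [zeroth_den_eq_one] at this

theorem s16_dens_add {α : ℝ} (hα : Irrational α) (n : ℕ) :
    (GenContFract.of α).dens n + (GenContFract.of α).dens (n + 1) ≤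
      (GenContFract.of α).dens (n + 2) := by
  obtain ⟨b, h1, hr⟩ := s16_dens_rec hα n
  have h3 := zero_le_of_den (v := α) (n := n + 1)
  nlinarith

theorem s16_d1 {α : ℝ} (h0 : 0 < α) (h1 : α < 1) :
    (GenContFract.of α).dens 1 = (⌊α⁻¹⌋ : ℝ) := by
  have hfr : Int.fract α = α := Int.fract_eq_self.mpr ⟨le_of_lt h0, h1⟩
  have hs : (GenContFract.of α).s.get? 0 = some ⟨1, (⌊(Int.fract α)⁻¹⌋ : ℝ)⟩ := by
    have := of_s_head (v := α) (by rw [hfr]; exact ne_of_gt h0)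
    rwa [Stream'.Seq.head] at this
  rw [first_den_eq hs, hfr]

theorem s16_d2 {α : ℝ} (hα : Irrational α) (h0 : 0 < α) (h1 : α < 1) :
    (GenContFract.of α).dens 2 =
      (⌊(Int.fract α⁻¹)⁻¹⌋ : ℝ) * (⌊α⁻¹⌋ : ℝ) + 1 := by
  have hβ : Int.fract α⁻¹ ≠ 0 := by
    intro h
    have : Irrational (Int.fract α⁻¹) := by unfold Int.fract; exact hα.inv.sub_intCast _
    exact this.ne_int 0 (by rw [h]; norm_num)
  have hfr : Int.fract α = α := Int.fract_eq_self.mpr ⟨le_of_lt h0, h1⟩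
  have hs1 : (GenContFract.of α).s.get? 1 = some ⟨1, (⌊(Int.fract α⁻¹)⁻¹⌋ : ℝ)⟩ := by
    rw [of_s_succ, hfr]
    have := of_s_head (v := α⁻¹) hβ
    rwa [Stream'.Seq.head] at this
  rw [dens_recurrence hs1 zeroth_den_eq_one (s16_d1 h0 h1)]
  ring

theorem s16_inv_facts {α : ℝ} (hα : Irrational α) (h0 : 0 < α) (h1 : α < 1) :
    1 ≤ ⌊α⁻¹⌋ ∧ (⌊α⁻¹⌋ : ℝ) * α < 1 ∧ 1 < ((⌊α⁻¹⌋ : ℝ) + 1) * α := by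
  have hinv : 1 < α⁻¹ := by
    rw [lt_inv_comm₀ one_pos h0]
    simpa using h1
  have hfl : (⌊α⁻¹⌋ : ℝ) ≤ α⁻¹ := Int.floor_le _
  have hne : (⌊α⁻¹⌋ : ℝ) ≠ α⁻¹ := fun h => (hα.inv.ne_int ⌊α⁻¹⌋) h.symm
  have hlt : (⌊α⁻¹⌋ : ℝ) < α⁻¹ := lt_of_le_of_ne hfl hne
  have hup : α⁻¹ < (⌊α⁻¹⌋ : ℝ) + 1 := Int.lt_floor_add_one _
  have hα1 : α * α⁻¹ = 1 := mul_inv_cancel₀ (ne_of_gt h0)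
  refine ⟨Int.le_floor.mpr (by exact_mod_cast hinv.le), ?_, ?_⟩
  · nlinarith
  · nlinarith

theorem s16_tpos {α : ℝ} (hα : Irrational α) (h0 : 0 < α) (h1 : α < 1) :
    ∃ q : ℤ, 1 ≤ q ∧ (q : ℝ) + 2 ≤ (GenContFract.of α).dens 3 ∧
      1 - α < Int.fract ((q : ℝ) * α) := by
  obtain ⟨ha1, hlt, hgt⟩ := s16_inv_facts hα h0 h1
  set a1 : ℤ := ⌊α⁻¹⌋ with ha1def
  have ha1R : (1 : ℝ) ≤ (a1 : ℝ) := by exact_mod_cast ha1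
  refine ⟨a1, ha1, ?_, ?_⟩
  · have hd1 : (GenContFract.of α).dens 1 = (a1 : ℝ) := s16_d1 h0 h1
    have hd0 : (GenContFract.of α).dens 0 = 1 := zeroth_den_eq_one
    have h01 := s16_dens_add hα 0
    have h12 := s16_dens_add hα 1
    linarith
  · have hfr : Int.fract ((a1 : ℝ) * α) = (a1 : ℝ) * α :=
      Int.fract_eq_self.mpr ⟨by nlinarith, hlt⟩
    rw [hfr]; linarith

theorem s16_spos {α : ℝ} (hα : Irrational α) (h0 : 0 < α) (h1 : α < 1) :
    ∃ q : ℤ, 1 ≤ q ∧ (q : ℝ) + 2 ≤ (GenContFract.of α).dens 4 ∧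
      Int.fract ((q : ℝ) * α) < 1 - α := by
  obtain ⟨ha1, hlt, hgt⟩ := s16_inv_facts hα h0 h1
  set a1 : ℤ := ⌊α⁻¹⌋ with ha1def
  have hd1 : (GenContFract.of α).dens 1 = (a1 : ℝ) := s16_d1 h0 h1
  have hd0 : (GenContFract.of α).dens 0 = 1 := zeroth_den_eq_one
  have h01 := s16_dens_add hα 0
  have h12 := s16_dens_add hα 1
  have h23 := s16_dens_add hα 2
  have ha1R : (1 : ℝ) ≤ (a1 : ℝ) := by exact_mod_cast ha1
  by_cases ha : a1 = 1
  · -- second digit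
    have hβirr : Irrational (Int.fract α⁻¹) := by unfold Int.fract; exact hα.inv.sub_intCast _
    set β : ℝ := Int.fract α⁻¹ with hβdef
    have hβ0 : 0 < β := lt_of_le_of_ne (Int.fract_nonneg _)
      (fun h => (hβirr.ne_int 0) (by rw [← h]; norm_num))
    have hβ1 : β < 1 := Int.fract_lt_one _
    have hβeq : β = α⁻¹ - 1 := by
      rw [hβdef, Int.fract, ← ha1def, ha]; norm_num
    have hαβ : α * (1 + β) = 1 := by
      rw [hβeq]; field_simp; ring
    have hinv2 : 1 < β⁻¹ := by rw [lt_inv_comm₀ one_pos hβ0]; simpa using hβ1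
    set a2 : ℤ := ⌊β⁻¹⌋ with ha2def
    have ha2 : 1 ≤ a2 := Int.le_floor.mpr (by exact_mod_cast hinv2.le)
    have ha2R : (1 : ℝ) ≤ (a2 : ℝ) := by exact_mod_cast ha2
    have hfl2 : (a2 : ℝ) < β⁻¹ :=
      lt_of_le_of_ne (Int.floor_le _) (fun h => (hβirr.inv.ne_int a2) h.symm)
    have hup2 : β⁻¹ < (a2 : ℝ) + 1 := Int.lt_floor_add_one _
    have hβ1' : β * β⁻¹ = 1 := mul_inv_cancel₀ (ne_of_gt hβ0)
    have hlo : (a2 : ℝ) * β < 1 := by nlinarith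
    have hhi : 1 < ((a2 : ℝ) + 1) * β := by nlinarith
    refine ⟨a2 + 1, by omega, ?_, ?_⟩
    · have hd2 : (GenContFract.of α).dens 2 = (a2 : ℝ) * (a1 : ℝ) + 1 := by
        rw [s16_d2 hα h0 h1, ← ha1def, ← hβdef, ← ha2def]
      have ha1R1 : (a1 : ℝ) = 1 := by rw [ha]; norm_num
      rw [ha1R1, mul_one] at hd2
      push_cast
      linarith
    · set v : ℝ := ((a2 : ℝ) + 1) * α - (a2 : ℝ) with hvdef
      have hv0 : 0 < v := by nlinarith
      have hvlt : v < 1 - α := by nlinarith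
      have hfr : Int.fract (((a2 + 1 : ℤ) : ℝ) * α) = v := by
        have h' : (((a2 + 1 : ℤ) : ℝ) * α) - (a2 : ℤ) = v := by push_cast; ring
        rw [← Int.fract_sub_intCast (((a2 + 1 : ℤ) : ℝ) * α) a2, h',
          Int.fract_eq_self.mpr ⟨hv0.le, by linarith⟩]
      rw [hfr]; exact hvlt
  · have ha2' : 2 ≤ a1 := by omega
    have ha2R : (2 : ℝ) ≤ (a1 : ℝ) := by exact_mod_cast ha2'
    refine ⟨a1 + 1, by omega, ?_, ?_⟩
    · push_cast
      have h34 := s16_dens_le_succ hα 3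
      linarith
    · have hx2 : ((a1 : ℝ) + 1) * α < 2 := by nlinarith
      have hfr : Int.fract (((a1 + 1 : ℤ) : ℝ) * α) = ((a1 : ℝ) + 1) * α - 1 := by
        have h' : (((a1 + 1 : ℤ) : ℝ) * α) - ((1 : ℤ) : ℝ) = ((a1 : ℝ) + 1) * α - 1 := by
          push_cast; ring
        rw [← Int.fract_sub_intCast (((a1 + 1 : ℤ) : ℝ) * α) 1, h',
          Int.fract_eq_self.mpr ⟨by linarith, by linarith⟩]
      rw [hfr]
      nlinarith

theorem s16_three (r0 r1 r2 x : ℝ)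
    (h0 : r0 = 0 ∨ r0 = 1 ∨ r0 = 2) (h1 : r1 = 0 ∨ r1 = 1 ∨ r1 = 2)
    (h2 : r2 = 0 ∨ r2 = 1 ∨ r2 = 2) (hx : x = 0 ∨ x = 1 ∨ x = 2)
    (d01 : r0 ≠ r1) (d02 : r0 ≠ r2) (d12 : r1 ≠ r2) :
    x = r0 ∨ x = r1 ∨ x = r2 := by
  rcases h0 with rfl | rfl | rfl <;> rcases h1 with rfl | rfl | rfl <;>
    rcases h2 with rfl | rfl | rfl <;>
    first
      | (exfalso; norm_num at d01 d02 d12; done)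
      | tauto

end S16AUX

theorem s16_TL_fract (α x : ℝ) : Int.fract (TL α x) = Int.fract (x + α) := by
  unfold TL
  split_ifs
  · rw [show x + 2 + α = (x + α) + ((2 : ℤ) : ℝ) by push_cast; ring, Int.fract_add_intCast]
  · ring_nf
  · ring_nf
  · ring_nf
  · rw [show x + α - 2 = (x + α) - ((2 : ℤ) : ℝ) by push_cast; ring, Int.fract_sub_intCast]
  · rw [show x + α - 3 = (x + α) - ((3 : ℤ) : ℝ) by push_cast; ring, Int.fract_sub_intCast]

/-- Case 2B bound for the L-surface: if there are a special interval J_{k+16}(ℓ₃) contained in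
a special interval J_{k+8}(q⁺⁺), and three distinct residues r₀, r₁, r₂ ∈ {0,1,2} such that the
orbit points y_i with q_{k+1}+q_{k+9} ≤ i ≤ m−q_{k+1}−q_{k+9} avoid each rⱼ + J_{k+16}(ℓ₃),
then m ≤ 2q_{k+1} + 2q_{k+9} + 2q_{k+17} + 6.  The gaps of the partitions A_{k+8}(α) and
A_{k+16}(α) are characterized as least elements. -/
theorem stmt16 (α : ℝ) (hα : Irrational α) (h0 : 0 < α) (h1 : α < 1)
    (k : ℕ) (hk : 1 ≤ k) (dst8 dss8 dst16 dss16 : ℝ)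
    (hdss8 : IsLeast {x : ℝ | ∃ q : ℤ, -1 ≤ q ∧ (q : ℝ) ≤ cfq α (k + 9) - 2 ∧ q ≠ 0 ∧
      Int.fract ((q : ℝ) * α) = x} dss8)
    (hdst8 : IsLeast {x : ℝ | ∃ q : ℤ, -1 ≤ q ∧ (q : ℝ) ≤ cfq α (k + 9) - 2 ∧ q ≠ 0 ∧
      1 - Int.fract ((q : ℝ) * α) = x} dst8)
    (hdss16 : IsLeast {x : ℝ | ∃ q : ℤ, -1 ≤ q ∧ (q : ℝ) ≤ cfq α (k + 17) - 2 ∧ q ≠ 0 ∧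
      Int.fract ((q : ℝ) * α) = x} dss16)
    (hdst16 : IsLeast {x : ℝ | ∃ q : ℤ, -1 ≤ q ∧ (q : ℝ) ≤ cfq α (k + 17) - 2 ∧ q ≠ 0 ∧
      1 - Int.fract ((q : ℝ) * α) = x} dst16)
    (m : ℕ) (y : ℕ → ℝ)
    (hy : ∀ i, 1 ≤ i → i ≤ m → y i ∈ Set.Ico (0 : ℝ) 3)
    (horb : ∀ i, 1 ≤ i → i + 1 ≤ m → TL α (y i) = y (i + 1))
    (ℓ3 qpp : ℤ) (hℓ1 : 1 ≤ ℓ3) (hℓ2 : (ℓ3 : ℝ) ≤ cfq α (k + 17) - 2)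
    (hqpp1 : 1 ≤ qpp) (hqpp2 : (qpp : ℝ) ≤ cfq α (k + 9) - 2)
    (hsub : Set.Ico (Int.fract ((ℓ3 : ℝ) * α) - dss16) (Int.fract ((ℓ3 : ℝ) * α) + dst16) ⊆
      Set.Ico (Int.fract ((qpp : ℝ) * α) - dss8) (Int.fract ((qpp : ℝ) * α) + dst8))
    (r0 r1 r2 : ℝ) (hr : ({r0, r1, r2} : Set ℝ) ⊆ {0, 1, 2})
    (hdist : r0 ≠ r1 ∧ r0 ≠ r2 ∧ r1 ≠ r2)
    (hfree : ∀ i : ℕ, cfq α (k + 1) + cfq α (k + 9) ≤ (i : ℝ) →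
      (i : ℝ) ≤ (m : ℝ) - cfq α (k + 1) - cfq α (k + 9) →
      ∀ r ∈ ({r0, r1, r2} : Set ℝ),
        y i ∉ Set.Ico (r + Int.fract ((ℓ3 : ℝ) * α) - dss16)
          (r + Int.fract ((ℓ3 : ℝ) * α) + dst16)) :
    (m : ℝ) ≤ 2 * cfq α (k + 1) + 2 * cfq α (k + 9) + 2 * cfq α (k + 17) + 6 := by
  by_contra hm
  push_neg at hm
  set c : ℝ := Int.fract ((ℓ3 : ℝ) * α) with hc
  set Q : ℝ := cfq α (k + 17) with hQ
  set q1 : ℝ := cfq α (k + 1) with hq1def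
  set q9 : ℝ := cfq α (k + 9) with hq9def
  have hQdens : Q = (GenContFract.of α).dens (k + 17) := rfl
  have hq1dens : q1 = (GenContFract.of α).dens (k + 1) := rfl
  have hq9dens : q9 = (GenContFract.of α).dens (k + 9) := rfl
  have hq1ge : 1 ≤ q1 := by rw [hq1dens]; exact s16_one_le_dens hα _
  have hq9ge : 1 ≤ q9 := by rw [hq9dens]; exact s16_one_le_dens hα _
  have hmono3 : (GenContFract.of α).dens 3 ≤ Q := by
    rw [hQdens]; exact s16_dens_mono hα (by omega)
  have hmono4 : (GenContFract.of α).dens 4 ≤ Q := by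
    rw [hQdens]; exact s16_dens_mono hα (by omega)
  have hfα : Int.fract α = α := Int.fract_eq_self.mpr ⟨h0.le, h1⟩
  have hfm1 : Int.fract (((-1 : ℤ) : ℝ) * α) = 1 - α := by
    push_cast
    rw [neg_one_mul, Int.fract_neg (by rw [hfα]; exact ne_of_gt h0), hfα]
  -- witnesses for the minima
  obtain ⟨s0, hs0m1, hs0Q, hs0ne, hs0f⟩ := hdss16.1
  obtain ⟨t0, ht0m1, ht0Q, ht0ne, ht0f⟩ := hdst16.1
  -- the positive test points
  obtain ⟨qs, hqs1, hqsB, hqsv⟩ := s16_spos hα h0 h1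
  obtain ⟨qt, hqt1, hqtB, hqtv⟩ := s16_tpos hα h0 h1
  have hqsQ : (qs : ℝ) ≤ Q - 2 := by linarith
  have hqtQ : (qt : ℝ) ≤ Q - 2 := by linarith
  have hsmem : dss16 ≤ Int.fract ((qs : ℝ) * α) :=
    hdss16.2 ⟨qs, by omega, hqsQ, by omega, rfl⟩
  have htmem : dst16 ≤ 1 - Int.fract ((qt : ℝ) * α) :=
    hdst16.2 ⟨qt, by omega, hqtQ, by omega, rfl⟩
  -- s0, t0 are positive
  have hs0pos : 1 ≤ s0 := by
    by_contra hneg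
    have : s0 = -1 := by omega
    rw [this, hfm1] at hs0f
    rw [← hs0f] at hsmem
    linarith
  have ht0pos : 1 ≤ t0 := by
    by_contra hneg
    have : t0 = -1 := by omega
    rw [this, hfm1] at ht0f
    rw [← ht0f] at htmem
    linarith
  -- positivity of the gaps
  have hη0 : 0 < dss16 := by
    rcases lt_or_eq_of_le (Int.fract_nonneg ((s0 : ℝ) * α)) with h | h
    · rw [← hs0f]; exact h
    · exfalso
      have hirr : Irrational ((s0 : ℝ) * α) := by
        rw [show ((s0 : ℝ) * α) = (s0 : ℤ) * α by push_cast; ring]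
        exact hα.intCast_mul hs0ne
      apply hirr.ne_int ⌊(s0 : ℝ) * α⌋
      have := h.symm
      unfold Int.fract at this
      linarith [this]
  have hζ0 : 0 < dst16 := by
    rw [← ht0f]
    have := Int.fract_lt_one ((t0 : ℝ) * α)
    linarith
  have hηc : dss16 ≤ c := hdss16.2 ⟨ℓ3, by omega, hℓ2, by omega, rfl⟩
  have hcζ : c + dst16 ≤ 1 := by
    have := hdst16.2 ⟨ℓ3, by omega, hℓ2, by omega, rfl⟩
    linarith
  -- integer window size
  set Mz : ℤ := ⌊Q⌋ - 2 with hMz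
  have hs0M : s0 ≤ Mz := by
    have : s0 + 2 ≤ ⌊Q⌋ := Int.le_floor.mpr (by push_cast; linarith)
    omega
  have ht0M : t0 ≤ Mz := by
    have : t0 + 2 ≤ ⌊Q⌋ := Int.le_floor.mpr (by push_cast; linarith)
    omega
  set M : ℕ := Mz.toNat with hM
  set s : ℕ := s0.toNat with hs
  set t : ℕ := t0.toNat with ht
  have hsR : ((s : ℕ) : ℝ) = ((s0 : ℤ) : ℝ) := by
    rw [hs]; exact_mod_cast congrArg Int.cast (Int.toNat_of_nonneg (by omega))
  have htR : ((t : ℕ) : ℝ) = ((t0 : ℤ) : ℝ) := by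
    rw [ht]; exact_mod_cast congrArg Int.cast (Int.toNat_of_nonneg (by omega))
  have hMR : ((M : ℕ) : ℝ) ≤ Q - 2 := by
    have h2 : ((Mz : ℤ) : ℝ) ≤ Q - 2 := by
      rw [hMz]; push_cast
      linarith [Int.floor_le Q]
    rw [hM]
    rwa [show ((Mz.toNat : ℕ) : ℝ) = ((Mz : ℤ) : ℝ) from by
      exact_mod_cast congrArg Int.cast (Int.toNat_of_nonneg (by omega))]
  -- the base index
  set i0 : ℕ := ⌈q1 + q9⌉₊ with hi0
  have hi0low : q1 + q9 ≤ (i0 : ℝ) := Nat.le_ceil _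
  have hi0up : (i0 : ℝ) < q1 + q9 + 1 := Nat.ceil_lt_add_one (by linarith)
  have hi0ge1 : 1 ≤ i0 := by
    by_contra h
    have : i0 = 0 := by omega
    rw [this] at hi0low
    norm_num at hi0low
    linarith
  -- the window fits below the middle range
  have hwinR : (i0 : ℝ) + 2 * (M : ℝ) ≤ (m : ℝ) - q1 - q9 - 1 := by linarith
  have hwinN : i0 + 2 * M + 1 ≤ m := by
    have h2 : ((i0 + 2 * M + 1 : ℕ) : ℝ) ≤ (m : ℝ) := by push_cast; linarith
    exact_mod_cast h2
  -- transfer the orbit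
  have htrans : ∀ j : ℕ, j ≤ 2 * M →
      Int.fract (y (i0 + j)) = Int.fract (y i0 + (j : ℝ) * α) := by
    intro j hj
    induction j with
    | zero => simp
    | succ n ih =>
      have hn := ih (by omega)
      have hstep : TL α (y (i0 + n)) = y (i0 + n + 1) :=
        horb (i0 + n) (by omega) (by omega)
      calc Int.fract (y (i0 + (n + 1)))
          = Int.fract (TL α (y (i0 + n))) := by rw [show i0 + (n+1) = i0 + n + 1 by omega, hstep]
        _ = Int.fract (y (i0 + n) + α) := s16_TL_fract α _
        _ = Int.fract (Int.fract (y (i0 + n)) + α) := s16_fract_shl _ _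
        _ = Int.fract (Int.fract (y i0 + (n : ℝ) * α) + α) := by rw [hn]
        _ = Int.fract ((y i0 + (n : ℝ) * α) + α) := (s16_fract_shl _ _).symm
        _ = Int.fract (y i0 + ((n + 1 : ℕ) : ℝ) * α) := by push_cast; ring_nf
  -- apply the covering lemma
  obtain ⟨q, hq2M, hqmem⟩ := s16_cover α c dss16 dst16 M s t
    (by omega) (by omega) (by omega) (by omega)
    hη0 hζ0 hηc hcζ
    (by rw [hsR]; exact hs0f) (by rw [htR]; linarith [ht0f]) (y i0)
  set i : ℕ := i0 + q with hi
  have hfri : Int.fract (y i) ∈ Set.Ico (c - dss16) (c + dst16) := by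
    rw [hi, htrans q hq2M]; exact hqmem
  have hilow : q1 + q9 ≤ (i : ℝ) := by
    rw [hi]; push_cast; linarith [Nat.cast_nonneg (α := ℝ) q]
  have hiup : (i : ℝ) ≤ (m : ℝ) - q1 - q9 := by
    rw [hi]; push_cast
    have : (q : ℝ) ≤ 2 * (M : ℝ) := by exact_mod_cast hq2M
    linarith
  have hi1 : 1 ≤ i := by omega
  have him : i ≤ m := by omega
  obtain ⟨hyl, hyu⟩ := hy i hi1 him
  -- the floor of y i
  set rr : ℤ := ⌊y i⌋ with hrr
  have hrr0 : 0 ≤ rr := Int.le_floor.mpr (by exact_mod_cast hyl)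
  have hrr2 : rr < 3 := Int.floor_lt.mpr (by exact_mod_cast hyu)
  have hsplit : y i = (rr : ℝ) + Int.fract (y i) := by
    rw [hrr]; unfold Int.fract; ring
  -- (rr : ℝ) is one of r0, r1, r2
  have hrmem : ((rr : ℤ) : ℝ) ∈ ({r0, r1, r2} : Set ℝ) := by
    have hr0 := hr (show r0 ∈ ({r0, r1, r2} : Set ℝ) by simp)
    have hr1 := hr (show r1 ∈ ({r0, r1, r2} : Set ℝ) by simp)
    have hr2 := hr (show r2 ∈ ({r0, r1, r2} : Set ℝ) by simp)
    simp only [Set.mem_insert_iff, Set.mem_singleton_iff] at hr0 hr1 hr2 ⊢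
    have hval : ((rr : ℤ) : ℝ) = 0 ∨ ((rr : ℤ) : ℝ) = 1 ∨ ((rr : ℤ) : ℝ) = 2 := by
      have : rr = 0 ∨ rr = 1 ∨ rr = 2 := by omega
      rcases this with h | h | h <;> rw [h] <;> norm_num
    exact s16_three r0 r1 r2 _ hr0 hr1 hr2 hval hdist.1 hdist.2.1 hdist.2.2
  -- contradiction with hfree
  apply hfree i hilow hiup ((rr : ℤ) : ℝ) hrmem
  rw [hsplit]
  obtain ⟨hf1, hf2⟩ := hfri
  constructor
  · linarith
  · linarith
end

section
/- (Khinchin direction, easy half) If a half-infinite geodesic on a finite polysquare surface P is superdense, then its slope is a badly approximable number. -/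
section Helpers

lemma nid_nonneg (x : ℝ) : 0 ≤ nearestIntDist x := abs_nonneg _

lemma nid_le (x : ℝ) (m : ℤ) : nearestIntDist x ≤ |x - m| := by
  rw [nearestIntDist, abs_sub_round_eq_min]
  rcases le_or_gt m ⌊x⌋ with h | h
  · refine (min_le_left _ _).trans (le_trans ?_ (le_abs_self _))
    have hm : (m : ℝ) ≤ (⌊x⌋ : ℝ) := by exact_mod_cast h
    have hfl : (⌊x⌋ : ℝ) ≤ x := Int.floor_le x
    rw [Int.fract]; linarith
  · refine (min_le_right _ _).trans (le_trans ?_ (neg_le_abs _))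
    have hm : (⌊x⌋ : ℝ) + 1 ≤ (m : ℝ) := by exact_mod_cast h
    rw [Int.fract]; linarith

lemma nid_le_abs (x : ℝ) : nearestIntDist x ≤ |x| := by simpa using nid_le x 0

lemma nid_add_int (x : ℝ) (m : ℤ) : nearestIntDist (x + m) = nearestIntDist x := by
  rw [nearestIntDist, nearestIntDist, round_add_intCast]
  push_cast
  ring_nf

lemma nid_neg (x : ℝ) : nearestIntDist (-x) = nearestIntDist x := by
  refine le_antisymm ?_ ?_
  · refine (nid_le (-x) (-(round x))).trans ?_
    rw [show -x - ((-(round x) : ℤ) : ℝ) = -(x - round x) by push_cast; ring, abs_neg]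
    exact le_of_eq rfl
  · refine (nid_le x (-(round (-x)))).trans ?_
    rw [show x - ((-(round (-x)) : ℤ) : ℝ) = -(-x - round (-x)) by push_cast; ring, abs_neg]
    exact le_of_eq rfl

lemma nid_add_le (a b : ℝ) : nearestIntDist (a + b) ≤ nearestIntDist a + nearestIntDist b := by
  refine (nid_le (a + b) (round a + round b)).trans ?_
  rw [show a + b - ((round a + round b : ℤ) : ℝ) = (a - round a) + (b - round b) by
    push_cast; ring]
  exact (abs_add_le _ _).trans (by rw [nearestIntDist, nearestIntDist])

lemma nid_sub_le (a b : ℝ) : nearestIntDist (a - b) ≤ nearestIntDist a + nearestIntDist b := by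
  rw [sub_eq_add_neg]
  exact (nid_add_le a (-b)).trans (by rw [nid_neg])

lemma nid_nsmul (x : ℝ) : ∀ k : ℕ, nearestIntDist ((k : ℝ) * x) ≤ (k : ℝ) * nearestIntDist x := by
  intro k
  induction k with
  | zero => simp [nearestIntDist]
  | succ k ih =>
      have h : ((k + 1 : ℕ) : ℝ) * x = (k : ℝ) * x + x := by push_cast; ring
      rw [h]
      refine (nid_add_le _ _).trans ?_
      push_cast
      linarith

lemma nid_rat_lb (q : ℕ) (hq : 1 ≤ q) (t : ℤ) (ht0 : t ≠ 0) (ht : |t| < 2 * q) :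
    1 / (2 * (q : ℝ)) ≤ nearestIntDist ((t : ℝ) / (2 * q)) := by
  have hq0 : (0 : ℝ) < 2 * q := by positivity
  rw [nearestIntDist]
  set m := round ((t : ℝ) / (2 * q)) with hm
  have hne : t - 2 * q * m ≠ 0 := by
    intro h
    have hteq : t = 2 * (q : ℤ) * m := by omega
    rcases eq_or_ne m 0 with hm0 | hm0
    · rw [hm0] at hteq; simp [hteq] at ht0
    · have : 2 * (q : ℤ) ≤ |t| := by
        rw [hteq, abs_mul]
        have h1 : (1 : ℤ) ≤ |m| := Int.one_le_abs hm0
        have h2 : |2 * (q : ℤ)| = 2 * q := abs_of_nonneg (by positivity)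
        nlinarith [abs_nonneg (2 * (q : ℤ))]
      omega
  have h1 : (1 : ℝ) ≤ |(t : ℝ) - 2 * q * m| := by
    have : (1 : ℤ) ≤ |t - 2 * q * m| := Int.one_le_abs hne
    calc (1 : ℝ) ≤ ((|t - 2 * q * m| : ℤ) : ℝ) := by exact_mod_cast this
      _ = |(t : ℝ) - 2 * q * m| := by push_cast [Int.cast_abs]; ring_nf
  have heq : (t : ℝ) / (2 * q) - m = ((t : ℝ) - 2 * q * m) / (2 * q) := by field_simp
  rw [heq, abs_div, abs_of_pos hq0]
  gcongr

lemma exists_far_point (β : ℝ) (q : ℕ) (hq : 1 ≤ q) :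
    ∃ w : ℝ, ∀ v : ℕ, v < q → 1 / (4 * (q : ℝ)) ≤ nearestIntDist ((v : ℝ) * β - w) := by
  by_contra hcon
  push_neg at hcon
  choose V hVlt hVd using fun t : ℕ => hcon ((2 * (t : ℝ) + 1) / (4 * q))
  have hmaps : ∀ t ∈ Finset.range (2 * q), V t ∈ Finset.range q := by
    intro t _; exact Finset.mem_range.mpr (hVlt t)
  obtain ⟨t, ht, t', ht', hne, heq⟩ :=
    Finset.exists_ne_map_eq_of_card_lt_of_maps_to
      (by simp only [Finset.card_range]; omega) hmaps
  rw [Finset.mem_range] at ht ht'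
  have h4q : (0 : ℝ) < 4 * q := by positivity
  have key : nearestIntDist (((2 * (t : ℝ) + 1) / (4 * q)) - ((2 * (t' : ℝ) + 1) / (4 * q)))
      < 1 / (2 * q) := by
    have e : ((2 * (t : ℝ) + 1) / (4 * q)) - ((2 * (t' : ℝ) + 1) / (4 * q))
        = ((V t : ℝ) * β - ((2 * (t' : ℝ) + 1) / (4 * q)))
          - ((V t : ℝ) * β - ((2 * (t : ℝ) + 1) / (4 * q))) := by ring
    rw [e]
    calc _ ≤ nearestIntDist ((V t : ℝ) * β - ((2 * (t' : ℝ) + 1) / (4 * q)))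
          + nearestIntDist ((V t : ℝ) * β - ((2 * (t : ℝ) + 1) / (4 * q))) := nid_sub_le _ _
      _ < 1 / (4 * q) + 1 / (4 * q) := by
          have h1 := hVd t'
          rw [← heq] at h1
          exact add_lt_add h1 (hVd t)
      _ = 1 / (2 * q) := by ring
  have e2 : ((2 * (t : ℝ) + 1) / (4 * q)) - ((2 * (t' : ℝ) + 1) / (4 * q))
      = (((t : ℤ) - (t' : ℤ) : ℤ) : ℝ) / (2 * q) := by
    push_cast; field_simp; ring
  rw [e2] at key
  have hlb := nid_rat_lb q hq ((t : ℤ) - t')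
    (by intro h; exact hne (by exact_mod_cast sub_eq_zero.mp h))
    (by rw [abs_sub_lt_iff]; omega)
  linarith

open GenContFract

lemma conts_int (α : ℝ) (n : ℕ) :
    ∃ a b : ℤ, ((GenContFract.of α).contsAux n).a = (a : ℝ) ∧
      ((GenContFract.of α).contsAux n).b = (b : ℝ) := by
  induction n using Nat.strong_induction_on with
  | _ n ih =>
    match n with
    | 0 => exact ⟨1, 0, by simp [contsAux], by simp [contsAux]⟩
    | 1 => exact ⟨⌊α⌋, 1, by simp [contsAux, of_h_eq_floor], by simp [contsAux]⟩
    | (n + 2) =>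
      obtain ⟨a1, b1, ha1, hb1⟩ := ih n (by omega)
      obtain ⟨a2, b2, ha2, hb2⟩ := ih (n + 1) (by omega)
      cases hs : (GenContFract.of α).s.get? n with
      | none =>
          refine ⟨a2, b2, ?_, ?_⟩ <;> · rw [show (GenContFract.of α).contsAux (n + 2)
              = (GenContFract.of α).contsAux (n + 1) from by rw [contsAux, hs]]
              <;> assumption
      | some gp =>
          have hrec := contsAux_recurrence hs rfl rfl
          have hga : gp.a = 1 := of_partNum_eq_one (partNum_eq_s_a hs)
          obtain ⟨z, hz⟩ := exists_int_eq_of_partDen (partDen_eq_s_b hs)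
          refine ⟨z * a2 + a1, z * b2 + b1, ?_, ?_⟩ <;>
            rw [hrec] <;> simp [hga, ← hz, ha1, ha2, hb1, hb2] <;> push_cast <;> ring

lemma one_le_dens (α : ℝ) (n : ℕ) : 1 ≤ (GenContFract.of α).dens n := by
  induction n with
  | zero => rw [zeroth_den_eq_one]
  | succ n ih => exact ih.trans (of_den_mono)

lemma not_term (α : ℝ) (hα : Irrational α) (n : ℕ) : ¬(GenContFract.of α).TerminatedAt n := by
  intro h
  obtain ⟨q, hq⟩ := (terminates_iff_rat α).mp ⟨n, h⟩
  exact hα ⟨q, hq.symm⟩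

lemma partDen_some (α : ℝ) (hα : Irrational α) (n : ℕ) :
    ∃ b, (GenContFract.of α).partDens.get? n = some b := by
  refine Option.ne_none_iff_exists'.mp fun h => not_term α hα n ?_
  exact terminatedAt_iff_partDen_none.mpr h

lemma nid_dens_mul_le (α : ℝ) (hα : Irrational α) (n : ℕ) :
    nearestIntDist ((GenContFract.of α).dens n * α) ≤ 1 / (GenContFract.of α).dens (n + 1) := by
  obtain ⟨a, b, ha, hb⟩ := conts_int α (n + 1)
  have hnum : (GenContFract.of α).nums n = (a : ℝ) := by
    rw [num_eq_conts_a, nth_cont_eq_succ_nth_contAux, ha]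
  have h := abs_sub_convs_le (not_term α hα n)
  rw [conv_eq_num_div_den] at h
  have hB : (0 : ℝ) < (GenContFract.of α).dens n := lt_of_lt_of_le one_pos (one_le_dens α n)
  have hB1 : (0 : ℝ) < (GenContFract.of α).dens (n + 1) :=
    lt_of_lt_of_le one_pos (one_le_dens α (n + 1))
  calc nearestIntDist ((GenContFract.of α).dens n * α)
      ≤ |(GenContFract.of α).dens n * α - (a : ℝ)| := nid_le _ a
    _ = (GenContFract.of α).dens n
        * |α - (GenContFract.of α).nums n / (GenContFract.of α).dens n| := by
        rw [hnum]
        have e : (GenContFract.of α).dens n * α - (a : ℝ)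
            = (GenContFract.of α).dens n * (α - a / (GenContFract.of α).dens n) := by
          field_simp
        rw [e, abs_mul, abs_of_pos hB]
    _ ≤ (GenContFract.of α).dens n
        * (1 / ((GenContFract.of α).dens n * (GenContFract.of α).dens (n + 1))) :=
        mul_le_mul_of_nonneg_left h hB.le
    _ = 1 / (GenContFract.of α).dens (n + 1) := by field_simp

lemma fract_step (α : ℝ) (h0 : 0 < α) (h1 : α < 1) (s : ℕ) (T : ℝ → ℝ) (f g : ℕ → ℕ)
    (hT1 : ∀ j < s, ∀ x ∈ Set.Ico ((j : ℝ)) ((j : ℝ) + 1 - α),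
      T x = (f j : ℝ) + α + (x - (j : ℝ)))
    (hT2 : ∀ j < s, ∀ x ∈ Set.Ico ((j : ℝ) + 1 - α) ((j : ℝ) + 1),
      T x = (g j : ℝ) + (x - ((j : ℝ) + 1 - α)))
    (x : ℝ) (hx : x ∈ Set.Ico (0 : ℝ) (s : ℝ)) :
    Int.fract (T x) = Int.fract (x + α) := by
  obtain ⟨hx0, hxs⟩ := hx
  have hfl0 : 0 ≤ ⌊x⌋ := Int.floor_nonneg.mpr hx0
  set j : ℕ := ⌊x⌋.toNat with hjdef
  have hj : ((j : ℕ) : ℝ) = ((⌊x⌋ : ℤ) : ℝ) := by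
    rw [hjdef]
    exact_mod_cast congrArg (fun z : ℤ => (z : ℝ)) (Int.toNat_of_nonneg hfl0)
  have hjs : j < s := by
    have h2 : ⌊x⌋ < (s : ℤ) := Int.floor_lt.mpr (by exact_mod_cast hxs)
    omega
  have hxj : (j : ℝ) ≤ x := hj ▸ Int.floor_le x
  have hxj1 : x < (j : ℝ) + 1 := by rw [hj]; exact Int.lt_floor_add_one x
  have hfr : Int.fract (x + α) = Int.fract ((x + α) - (j : ℝ)) := by
    rw [show (x + α) - (j : ℝ) = (x + α) - ((j : ℕ) : ℤ) by push_cast; ring, Int.fract_sub_intCast]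
  rcases lt_or_ge x ((j : ℝ) + 1 - α) with hc | hc
  · have hR : Int.fract (x + α) = x + α - j := by
      rw [hfr]
      exact Int.fract_eq_self.mpr ⟨by linarith, by linarith⟩
    have hL : Int.fract ((f j : ℝ) + α + (x - (j : ℝ))) = α + (x - (j : ℝ)) := by
      rw [show (f j : ℝ) + α + (x - (j : ℝ)) = (α + (x - (j : ℝ))) + ((f j : ℕ) : ℝ) from by
        ring, Int.fract_add_natCast]
      exact Int.fract_eq_self.mpr ⟨by linarith, by linarith⟩
    rw [hT1 j hjs x ⟨hxj, hc⟩, hL, hR]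
    ring
  · have hR : Int.fract (x + α) = x + α - j - 1 := by
      have h2 : Int.fract (x + α - (j : ℝ) - 1) = x + α - (j : ℝ) - 1 :=
        Int.fract_eq_self.mpr ⟨by linarith, by linarith⟩
      calc Int.fract (x + α) = Int.fract (x + α - ((⌊x⌋ + 1 : ℤ) : ℝ)) :=
            (Int.fract_sub_intCast _ _).symm
        _ = Int.fract (x + α - (j : ℝ) - 1) := by
            congr 1
            push_cast
            rw [← hj]
            ring
        _ = x + α - (j : ℝ) - 1 := h2
    have hL : Int.fract ((g j : ℝ) + (x - ((j : ℝ) + 1 - α))) = x + α - (j : ℝ) - 1 := by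
      rw [show (g j : ℝ) + (x - ((j : ℝ) + 1 - α))
          = (x + α - (j : ℝ) - 1) + ((g j : ℕ) : ℝ) from by ring, Int.fract_add_natCast]
      exact Int.fract_eq_self.mpr ⟨by linarith, by linarith⟩
    rw [hT2 j hjs x ⟨hc, hxj1⟩, hL, hR]

lemma fract_fract_add (a c : ℝ) : Int.fract (Int.fract a + c) = Int.fract (a + c) := by
  conv_rhs => rw [show a = Int.fract a + (⌊a⌋ : ℝ) from by rw [Int.fract]; ring]
  rw [show Int.fract a + (⌊a⌋ : ℝ) + c = (Int.fract a + c) + (⌊a⌋ : ℝ) from by ring,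
    Int.fract_add_intCast]

lemma nid_pos_of_irrational (x : ℝ) (hx : Irrational x) : 0 < nearestIntDist x := by
  rcases (nid_nonneg x).lt_or_eq with h | h
  · exact h
  · exfalso
    have h0 : |x - round x| = 0 := by rw [← nearestIntDist, ← h]
    have h1 : x - round x = 0 := abs_eq_zero.mp h0
    exact hx.ne_int (round x) (by linarith)

end Helpers

set_option maxHeartbeats 1600000 in
/-- Khinchin direction, easy half.  A half-infinite geodesic of slope 1/α on a finite
polysquare surface with s faces is encoded by its successive crossing points y_1, y_2, ... of
the s horizontal edges (identified with [0,s)), which form an orbit of the induced interval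
exchange transformation T; consecutive crossings are a time √(1+α²) apart.  If the geodesic is
superdense — there is C > 0 such that for every n ≥ 1 its initial segment of length Cn gets
(1/n)-close to every point — then the slope is badly approximable, i.e. the continued fraction
digits of α are bounded. -/
theorem stmt17 (α : ℝ) (hα : Irrational α) (h0 : 0 < α) (h1 : α < 1)
    (s : ℕ) (hs : 1 ≤ s) (T : ℝ → ℝ) (f g : ℕ → ℕ)
    (hf : Set.BijOn f (Set.Iio s) (Set.Iio s))
    (hg : Set.BijOn g (Set.Iio s) (Set.Iio s))
    (hT1 : ∀ j < s, ∀ x ∈ Set.Ico ((j : ℝ)) ((j : ℝ) + 1 - α),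
      T x = (f j : ℝ) + α + (x - (j : ℝ)))
    (hT2 : ∀ j < s, ∀ x ∈ Set.Ico ((j : ℝ) + 1 - α) ((j : ℝ) + 1),
      T x = (g j : ℝ) + (x - ((j : ℝ) + 1 - α)))
    (y : ℕ → ℝ)
    (hy : ∀ i, 1 ≤ i → y i ∈ Set.Ico (0 : ℝ) (s : ℝ))
    (horb : ∀ i, 1 ≤ i → T (y i) = y (i + 1))
    (hsuper : ∃ C > (0 : ℝ), ∀ n : ℕ, 1 ≤ n → ∀ z ∈ Set.Ico (0 : ℝ) (s : ℝ),
      ∃ i : ℕ, 1 ≤ i ∧ (i : ℝ) * Real.sqrt (1 + α ^ 2) ≤ C * n ∧ |y i - z| ≤ 1 / n) :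
    ∃ A : ℝ, ∀ i : ℕ, 1 ≤ i → cfa α i ≤ A := by
  obtain ⟨C, hC, hsup⟩ := hsuper
  -- fract of orbit is a rotation orbit
  have hfr : ∀ i, 1 ≤ i → Int.fract (y i) = Int.fract (y 1 + ((i - 1 : ℕ) : ℝ) * α) := by
    intro i hi
    induction i, hi using Nat.le_induction with
    | base => simp
    | succ i hi ih =>
        have hstep : Int.fract (y (i + 1)) = Int.fract (y i + α) := by
          rw [← horb i hi]
          exact fract_step α h0 h1 s T f g hT1 hT2 (y i) (hy i hi)
        have h2 : Int.fract (y i + α) = Int.fract (Int.fract (y i) + α) :=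
          (fract_fract_add (y i) α).symm
        rw [hstep, h2, ih, fract_fract_add]
        congr 1
        have h3 : ((i - 1 : ℕ) : ℝ) = (i : ℝ) - 1 := by
          have : (1:ℕ) ≤ i := hi
          push_cast [Nat.cast_sub this]
          ring
        have h4 : ((i + 1 - 1 : ℕ) : ℝ) = (i : ℝ) := by norm_num
        rw [h3, h4]
        ring
  have hsqrt : 1 ≤ Real.sqrt (1 + α ^ 2) := by
    nlinarith [Real.sq_sqrt (show (0:ℝ) ≤ 1 + α ^ 2 by positivity),
      Real.sqrt_nonneg (1 + α ^ 2)]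
  -- the main inequality on denominators
  have main : ∀ n : ℕ,
      (GenContFract.of α).dens (n + 1) ≤ 64 * C * (GenContFract.of α).dens n := by
    intro n
    obtain ⟨a, b, ha, hb⟩ := conts_int α (n + 1)
    have hden : (GenContFract.of α).dens n = (b : ℝ) := by
      rw [GenContFract.den_eq_conts_b, GenContFract.nth_cont_eq_succ_nth_contAux, hb]
    have hb1 : 1 ≤ b := by
      have h2 := one_le_dens α n
      rw [hden] at h2
      exact_mod_cast h2
    set q : ℕ := b.toNat with hqdef
    have hq1 : 1 ≤ q := by omega
    have hqr : ((q : ℕ) : ℝ) = (GenContFract.of α).dens n := by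
      rw [hden, hqdef]
      exact_mod_cast congrArg (fun z : ℤ => (z : ℝ)) (Int.toNat_of_nonneg (by omega))
    have hq0 : (0 : ℝ) < (q : ℝ) := by positivity
    obtain ⟨w, hw⟩ := exists_far_point α q hq1
    set z := Int.fract (y 1 + w) with hz
    have hzmem : z ∈ Set.Ico (0 : ℝ) (s : ℝ) :=
      ⟨Int.fract_nonneg _, lt_of_lt_of_le (Int.fract_lt_one _) (by exact_mod_cast hs)⟩
    obtain ⟨i, hi1, hile, hyz⟩ := hsup (8 * q) (by omega) z hzmem
    have hile' : (i : ℝ) ≤ C * (8 * q) := by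
      have h2 : (i : ℝ) ≤ (i : ℝ) * Real.sqrt (1 + α ^ 2) :=
        le_mul_of_one_le_right (Nat.cast_nonneg i) hsqrt
      calc (i : ℝ) ≤ C * ((8 * q : ℕ) : ℝ) := h2.trans hile
        _ = C * (8 * q) := by push_cast; ring
    have hkle : ((i - 1 : ℕ) : ℝ) ≤ C * (8 * q) := by
      refine le_trans ?_ hile'
      exact_mod_cast Nat.sub_le i 1
    -- distance from the orbit point to the far point
    have hinv : nearestIntDist (y i - z) = nearestIntDist (((i - 1 : ℕ) : ℝ) * α - w) := by
      have e1 : y i - z = (Int.fract (y i) - z) + ((⌊y i⌋ : ℤ) : ℝ) := by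
        rw [Int.fract]; push_cast; ring
      rw [e1, nid_add_int, hfr i hi1]
      have e2 : Int.fract (y 1 + ((i - 1 : ℕ) : ℝ) * α) - z
          = (((i - 1 : ℕ) : ℝ) * α - w)
            + (((⌊y 1 + w⌋ - ⌊y 1 + ((i - 1 : ℕ) : ℝ) * α⌋ : ℤ)) : ℝ) := by
        rw [hz, Int.fract, Int.fract]; push_cast; ring
      rw [e2, nid_add_int]
    have hd1 : nearestIntDist (((i - 1 : ℕ) : ℝ) * α - w) ≤ 1 / (8 * q) := by
      rw [← hinv]
      refine (nid_le_abs _).trans ?_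
      calc |y i - z| ≤ 1 / ((8 * q : ℕ) : ℝ) := hyz
        _ = 1 / (8 * (q : ℝ)) := by push_cast; ring
    have hδpos : 0 < nearestIntDist ((q : ℝ) * α) :=
      nid_pos_of_irrational _ (hα.natCast_mul (show q ≠ 0 by omega))
    -- triangle inequality chain
    have hv : (i - 1) % q < q := Nat.mod_lt _ (by omega)
    have h2 := hw ((i - 1) % q) hv
    have ecast : (q : ℝ) * (((i - 1) / q : ℕ) : ℝ) + (((i - 1) % q : ℕ) : ℝ)
        = ((i - 1 : ℕ) : ℝ) := by
      exact_mod_cast congrArg (fun m : ℕ => (m : ℝ)) (Nat.div_add_mod (i - 1) q)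
    have e3 : (((i - 1) % q : ℕ) : ℝ) * α - w
        = (((i - 1 : ℕ) : ℝ) * α - w) - (((i - 1) / q : ℕ) : ℝ) * ((q : ℝ) * α) := by
      linear_combination α * ecast
    have h4 := nid_sub_le (((i - 1 : ℕ) : ℝ) * α - w) ((((i - 1) / q : ℕ) : ℝ) * ((q : ℝ) * α))
    rw [← e3] at h4
    have h5 : nearestIntDist ((((i - 1) / q : ℕ) : ℝ) * ((q : ℝ) * α))
        ≤ (((i - 1) / q : ℕ) : ℝ) * nearestIntDist ((q : ℝ) * α) := nid_nsmul _ _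
    have h6 : (((i - 1) / q : ℕ) : ℝ) ≤ 8 * C := by
      have h7 : (((i - 1) / q : ℕ) : ℝ) * q ≤ ((i - 1 : ℕ) : ℝ) := by
        exact_mod_cast Nat.div_mul_le_self (i - 1) q
      have h8 : ((i - 1 : ℕ) : ℝ) ≤ 8 * C * (q : ℝ) := by linarith
      nlinarith
    have htri : 1 / (4 * (q : ℝ)) ≤ 1 / (8 * (q : ℝ)) + 8 * C * nearestIntDist ((q : ℝ) * α) := by
      calc 1 / (4 * (q : ℝ)) ≤ nearestIntDist ((((i - 1) % q : ℕ) : ℝ) * α - w) := h2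
        _ ≤ nearestIntDist (((i - 1 : ℕ) : ℝ) * α - w)
            + nearestIntDist ((((i - 1) / q : ℕ) : ℝ) * ((q : ℝ) * α)) := h4
        _ ≤ 1 / (8 * (q : ℝ)) + (((i - 1) / q : ℕ) : ℝ) * nearestIntDist ((q : ℝ) * α) :=
            add_le_add hd1 h5
        _ ≤ 1 / (8 * (q : ℝ)) + 8 * C * nearestIntDist ((q : ℝ) * α) := by nlinarith
    have hδlb : 1 / (64 * C * (q : ℝ)) ≤ nearestIntDist ((q : ℝ) * α) := by
      have h8 : 1 / (8 * (q : ℝ)) ≤ 8 * C * nearestIntDist ((q : ℝ) * α) := by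
        have : 1 / (4 * (q : ℝ)) - 1 / (8 * (q : ℝ)) = 1 / (8 * (q : ℝ)) := by
          field_simp; ring
        linarith
      rw [div_le_iff₀ (by positivity)]
      have h9 : (0 : ℝ) < 8 * (q : ℝ) := by positivity
      rw [div_le_iff₀ h9] at h8
      nlinarith
    have hδub : nearestIntDist ((q : ℝ) * α) ≤ 1 / (GenContFract.of α).dens (n + 1) := by
      rw [hqr]
      exact nid_dens_mul_le α hα n
    have hB1 : (0 : ℝ) < (GenContFract.of α).dens (n + 1) :=
      lt_of_lt_of_le one_pos (one_le_dens α (n + 1))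
    have h10 : 1 / (64 * C * (q : ℝ)) ≤ 1 / (GenContFract.of α).dens (n + 1) :=
      hδlb.trans hδub
    rw [div_le_div_iff₀ (by positivity) hB1] at h10
    calc (GenContFract.of α).dens (n + 1) ≤ 64 * C * (q : ℝ) := by linarith
      _ = 64 * C * (GenContFract.of α).dens n := by rw [hqr]
  -- conclude boundedness of the partial quotients
  refine ⟨64 * C, fun i hi => ?_⟩
  obtain ⟨b, hbsome⟩ := partDen_some α hα (i - 1)
  have hcfa : cfa α i = b := by rw [cfa, hbsome]; rfl
  have hle := GenContFract.le_of_succ_get?_den hbsome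
  have hm := main (i - 1)
  have hBpos : (0 : ℝ) < (GenContFract.of α).dens (i - 1) :=
    lt_of_lt_of_le one_pos (one_le_dens α (i - 1))
  rw [hcfa]
  have h11 : b * (GenContFract.of α).dens (i - 1)
      ≤ 64 * C * (GenContFract.of α).dens (i - 1) := hle.trans hm
  exact le_of_mul_le_mul_right h11 hBpos
end
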